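/- arXiv:2409.03886 — 9 statements merged into one kernel-verified Lean document; each statement's English description precedes it below -/
import Mathlib

section
/- Let t₀ < T ≤ ∞, let A₃ : [t₀, T) → (0, ∞) be differentiable and nondecreasing, let f : [t₀, T) → ℝ be continuous, and let g : [t₀, T) → ℝ be differentiable with g'(t) = (A₃'(t)/A₃(t)) g(t) − f(t)² for all t ∈ [t₀, T). If g(t₀) < 0, then g(t) ≤ g(t₀) < 0 for all t ∈ [t₀, T). -/
/-- Let `t₀ < T ≤ ∞`, let `A₃ : [t₀, T) → (0, ∞)` be differentiable and
nondecreasing, `f` continuous, and `g` differentiable with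
`g' = (A₃'/A₃) g − f²` on `[t₀, T)`. If `g(t₀) < 0`, then `g(t) ≤ g(t₀) < 0` on `[t₀, T)`. -/
theorem negativity_preserved (t₀ : ℝ) (T : EReal) (hT : (t₀ : EReal) < T)
    (A₃ A₃' f g : ℝ → ℝ)
    (hA₃pos : ∀ t, t₀ ≤ t → (t : EReal) < T → 0 < A₃ t)
    (hA₃deriv : ∀ t, t₀ ≤ t → (t : EReal) < T →
      HasDerivWithinAt A₃ (A₃' t) {t : ℝ | t₀ ≤ t ∧ (t : EReal) < T} t)
    (hA₃mono : MonotoneOn A₃ {t : ℝ | t₀ ≤ t ∧ (t : EReal) < T})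
    (hf : ContinuousOn f {t : ℝ | t₀ ≤ t ∧ (t : EReal) < T})
    (hg : ∀ t, t₀ ≤ t → (t : EReal) < T →
      HasDerivWithinAt g (A₃' t / A₃ t * g t - (f t) ^ 2)
        {t : ℝ | t₀ ≤ t ∧ (t : EReal) < T} t)
    (h0 : g t₀ < 0) :
    ∀ t, t₀ ≤ t → (t : EReal) < T → g t ≤ g t₀ ∧ g t < 0 := by
  set D : Set ℝ := {t : ℝ | t₀ ≤ t ∧ (t : EReal) < T} with hD
  have hDmem : ∀ t, t ∈ D ↔ (t₀ ≤ t ∧ (t : EReal) < T) := fun t => Iff.rfl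
  have ht₀D : t₀ ∈ D := ⟨le_refl _, hT⟩
  have hconv : Convex ℝ D := by
    apply Set.OrdConnected.convex
    constructor
    intro x hx y hy z hz
    exact ⟨hx.1.trans hz.1, lt_of_le_of_lt (EReal.coe_le_coe_iff.2 hz.2) hy.2⟩
  -- h = g / A₃ has nonpositive derivative −f²/A₃ on D
  set h : ℝ → ℝ := fun t => g t / A₃ t with hh
  have hhderiv : ∀ t ∈ D, HasDerivWithinAt h (-(f t) ^ 2 / A₃ t) D t := by
    intro t ht
    have hA : A₃ t ≠ 0 := (hA₃pos t ht.1 ht.2).ne'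
    have := (hg t ht.1 ht.2).div (hA₃deriv t ht.1 ht.2) hA
    refine this.congr_deriv ?_
    field_simp
    ring
  have hhcont : ContinuousOn h D := by
    apply ContinuousOn.div
    · exact fun t ht => (hg t ht.1 ht.2).continuousWithinAt
    · exact fun t ht => (hA₃deriv t ht.1 ht.2).continuousWithinAt
    · exact fun t ht => (hA₃pos t ht.1 ht.2).ne'
  have hanti : AntitoneOn h D := by
    apply antitoneOn_of_hasDerivWithinAt_nonpos hconv hhcont
    · intro x hx
      exact (hhderiv x (interior_subset hx)).mono interior_subset
    · intro x hx
      have hx' := interior_subset hx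
      have hA := hA₃pos x hx'.1 hx'.2
      exact div_nonpos_of_nonpos_of_nonneg (neg_nonpos.2 (sq_nonneg _)) hA.le
  intro t ht htT
  have htD : t ∈ D := ⟨ht, htT⟩
  have hle : h t ≤ h t₀ := hanti ht₀D htD ht
  have hA0 := hA₃pos t₀ le_rfl hT
  have hAt := hA₃pos t ht htT
  have hAmono : A₃ t₀ ≤ A₃ t := hA₃mono ht₀D htD ht
  have hq : g t₀ / A₃ t₀ < 0 := div_neg_of_neg_of_pos h0 hA0
  have hgt : g t ≤ (g t₀ / A₃ t₀) * A₃ t := by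
    calc g t = (g t / A₃ t) * A₃ t := by field_simp
    _ ≤ (g t₀ / A₃ t₀) * A₃ t := mul_le_mul_of_nonneg_right hle hAt.le
  have h2 : (g t₀ / A₃ t₀) * A₃ t ≤ (g t₀ / A₃ t₀) * A₃ t₀ :=
    mul_le_mul_of_nonpos_left hAmono hq.le
  have h3 : (g t₀ / A₃ t₀) * A₃ t₀ = g t₀ := by field_simp
  have hfinal : g t ≤ g t₀ := hgt.trans (h2.trans_eq h3)
  exact ⟨hfinal, hfinal.trans_lt h0⟩
end

section
/- Let ℓ > 0, let g : [t₀, ∞) → ℝ be continuous with g(t) → G_∞ as t → ∞, let β : [t₀, ∞) → ℝ be continuous with β(t) → 1/ℓ as t → ∞, and let f : [t₀, ∞) → ℝ be differentiable, bounded, with f(t₀) > 0 and f'(t) = (β(t) − g(t)) f(t) for all t. Then G_∞ ≥ 1/ℓ. -/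
open Filter

/-- Let `ℓ > 0`, `g → G_∞`, `β → 1/ℓ`, and let `f` be differentiable,
bounded, with `f(t₀) > 0` and `f' = (β − g) f`. Then `G_∞ ≥ 1/ℓ`. -/
theorem mass_lower_bound (t₀ ℓ Ginf : ℝ) (hℓ : 0 < ℓ)
    (g β f : ℝ → ℝ)
    (hgcont : ContinuousOn g (Set.Ici t₀))
    (hglim : Tendsto g atTop (nhds Ginf))
    (hβcont : ContinuousOn β (Set.Ici t₀))
    (hβlim : Tendsto β atTop (nhds (1 / ℓ)))
    (hfderiv : ∀ t ∈ Set.Ici t₀, HasDerivWithinAt f ((β t - g t) * f t) (Set.Ici t₀) t)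
    (hfbdd : ∃ M : ℝ, ∀ t ∈ Set.Ici t₀, |f t| ≤ M)
    (hf0 : f t₀ > 0) :
    Ginf ≥ 1 / ℓ := by
  by_contra hlt
  push_neg at hlt
  obtain ⟨M, hM⟩ := hfbdd
  have hφcont : ContinuousOn (fun s => β s - g s) (Set.Ici t₀) := hβcont.sub hgcont
  set ε : ℝ := (1 / ℓ - Ginf) / 2 with hεdef
  have hεpos : 0 < ε := by simp only [hεdef]; linarith
  have hφlim : Tendsto (fun s => β s - g s) atTop (nhds (1 / ℓ - Ginf)) := hβlim.sub hglim
  have hev : ∀ᶠ t in atTop, ε ≤ β t - g t :=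
    hφlim.eventually (eventually_ge_nhds (by simp only [hεdef]; linarith))
  obtain ⟨T₁, hT₁⟩ := eventually_atTop.1 hev
  set T : ℝ := max T₁ t₀ with hTdef
  have hTt₀ : t₀ ≤ T := le_max_right _ _
  -- integrability of the coefficient
  have hint : ∀ a b : ℝ, t₀ ≤ a → t₀ ≤ b →
      IntervalIntegrable (fun s => β s - g s) MeasureTheory.volume a b := fun a b ha hb =>
    (hφcont.mono (fun x hx => le_trans (le_min ha hb) hx.1)).intervalIntegrable
  -- the primitive
  set F : ℝ → ℝ := fun t => ∫ s in t₀..t, (β s - g s) with hFdef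
  have hFderiv : ∀ y ∈ Set.Ici t₀, HasDerivWithinAt F (β y - g y) (Set.Ici y) y := by
    intro y hy
    refine intervalIntegral.integral_hasDerivWithinAt_right (hint t₀ y le_rfl hy)
      (t := Set.Ioi y) ⟨Set.Ici t₀, ?_, hφcont.aestronglyMeasurable measurableSet_Ici⟩
      ((hφcont y hy).mono (fun x hx => Set.mem_Ici.2 (le_trans hy (le_of_lt (Set.mem_Ioi.1 hx)))))
    exact mem_of_superset self_mem_nhdsWithin (fun x hx => Set.mem_Ici.2 (le_trans hy (le_of_lt (Set.mem_Ioi.1 hx))))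
  have hFcont : ∀ t, t₀ ≤ t → ContinuousOn F (Set.Icc t₀ t) := by
    intro t ht
    have := intervalIntegral.continuousOn_primitive_interval' (hint t₀ t le_rfl ht)
      Set.left_mem_uIcc
    rwa [Set.uIcc_of_le ht] at this
  -- h = f * exp(-F) is constant
  set h : ℝ → ℝ := fun t => f t * Real.exp (-F t) with hhdef
  have hhderiv : ∀ y ∈ Set.Ici t₀, HasDerivWithinAt h 0 (Set.Ici y) y := by
    intro y hy
    have h1 := (hfderiv y hy).mono (Set.Ici_subset_Ici.2 hy)
    have h2 := ((hFderiv y hy).neg).exp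
    have h3 : HasDerivWithinAt (fun x => f x * Real.exp (-F x))
        ((β y - g y) * f y * Real.exp (-F y) + f y * (Real.exp (-F y) * -(β y - g y)))
        (Set.Ici y) y := h1.mul h2
    convert h3 using 1
    ring
  have hfeq : ∀ t, t₀ ≤ t → f t = f t₀ * Real.exp (F t) := by
    intro t ht
    have hcont : ContinuousOn h (Set.Icc t₀ t) := by
      refine ContinuousOn.mul (fun y hy => ((hfderiv y hy.1).continuousWithinAt).mono
        (fun x hx => hx.1)) ?_
      exact Real.continuous_exp.comp_continuousOn ((hFcont t ht).neg)
    have hc := constant_of_has_deriv_right_zero hcont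
      (fun y hy => hhderiv y hy.1) t ⟨ht, le_rfl⟩
    have hF0 : F t₀ = 0 := intervalIntegral.integral_same
    simp only [hhdef, hF0, neg_zero, Real.exp_zero, mul_one] at hc
    have hexp : Real.exp (-F t) ≠ 0 := Real.exp_ne_zero _
    field_simp [Real.exp_neg] at hc ⊢
    rw [← hc, mul_assoc, ← Real.exp_add]; simp
  -- lower bound on F for t ≥ T
  have hFlow : ∀ t, T ≤ t → F T + ε * (t - T) ≤ F t := by
    intro t ht
    have htt₀ : t₀ ≤ t := le_trans hTt₀ ht
    have hsplit : F T + ∫ s in T..t, (β s - g s) = F t :=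
      intervalIntegral.integral_add_adjacent_intervals (hint t₀ T le_rfl hTt₀)
        (hint T t hTt₀ htt₀)
    have hmono : ε * (t - T) ≤ ∫ s in T..t, (β s - g s) := by
      have := intervalIntegral.integral_mono_on ht
        (intervalIntegrable_const (c := ε)) (hint T t hTt₀ htt₀)
        (fun x hx => hT₁ x (le_trans (le_max_left _ _) hx.1))
      rwa [intervalIntegral.integral_const, smul_eq_mul, mul_comm] at this
    linarith
  -- contradiction at a far enough time
  set c : ℝ := f t₀ * Real.exp (F T) with hcdef
  have hcpos : 0 < c := mul_pos hf0 (Real.exp_pos _)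
  set x : ℝ := max (M / c) 0 with hxdef
  have hx0 : 0 ≤ x := le_max_right _ _
  set t : ℝ := T + x / ε with htdef
  have hTt : T ≤ t := by
    have : 0 ≤ x / ε := div_nonneg hx0 hεpos.le
    simp only [htdef]; linarith
  have htt₀ : t₀ ≤ t := le_trans hTt₀ hTt
  have hFt : F T + x ≤ F t := by
    have := hFlow t hTt
    have hxε : ε * (t - T) = x := by
      simp only [htdef]
      field_simp
      ring
    linarith [hxε ▸ this]
  have hflarge : c * (x + 1) ≤ f t := by
    rw [hfeq t htt₀]
    have h1 : Real.exp (F T + x) ≤ Real.exp (F t) := Real.exp_le_exp.2 hFt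
    have h2 : x + 1 ≤ Real.exp x := Real.add_one_le_exp x
    have h3 : Real.exp (F T) * (x + 1) ≤ Real.exp (F T) * Real.exp x :=
      mul_le_mul_of_nonneg_left h2 (Real.exp_pos _).le
    calc c * (x + 1) = f t₀ * (Real.exp (F T) * (x + 1)) := by rw [hcdef]; ring
      _ ≤ f t₀ * (Real.exp (F T) * Real.exp x) := by
          exact mul_le_mul_of_nonneg_left h3 hf0.le
      _ = f t₀ * Real.exp (F T + x) := by rw [Real.exp_add]
      _ ≤ f t₀ * Real.exp (F t) := mul_le_mul_of_nonneg_left h1 hf0.le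
  have hMc : M < c * (x + 1) := by
    have : M / c ≤ x := le_max_left _ _
    have h4 : M ≤ x * c := (div_le_iff₀ hcpos).1 this
    nlinarith
  have := hM t htt₀
  have : f t ≤ M := le_trans (le_abs_self _) this
  linarith
end

section
/- Let A₃ : [t₀, ∞) → (0, ∞) be differentiable and nondecreasing with limit ℓ ∈ (0, ∞) as t → ∞, let f : [t₀, ∞) → ℝ be continuous, and let g : [t₀, ∞) → ℝ be differentiable and bounded with g'(t) = (A₃'(t)/A₃(t)) g(t) − f(t)², and set G_∞ = lim_{t→∞} g(t). Then ∫_t^∞ f(s)²/A₃(s) ds is finite for every t ≥ t₀ and g(t) = A₃(t) · ( G_∞/ℓ + ∫_t^∞ f(s)²/A₃(s) ds ) for all t ≥ t₀. -/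
open Filter MeasureTheory

/-- Let `A₃ : [t₀, ∞) → (0, ∞)` be differentiable and nondecreasing with
limit `ℓ ∈ (0, ∞)`, `f` continuous, `g` differentiable and bounded with
`g' = (A₃'/A₃) g − f²`, and `G_∞ = lim g`. Then `∫_t^∞ f²/A₃` is finite for every
`t ≥ t₀`, and `g(t) = A₃(t)·(G_∞/ℓ + ∫_t^∞ f(s)²/A₃(s) ds)`. -/
theorem integral_representation (t₀ ℓ Ginf : ℝ) (hℓ : 0 < ℓ)
    (A₃ A₃' f g : ℝ → ℝ)
    (hA₃pos : ∀ t ∈ Set.Ici t₀, 0 < A₃ t)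
    (hA₃deriv : ∀ t ∈ Set.Ici t₀, HasDerivWithinAt A₃ (A₃' t) (Set.Ici t₀) t)
    (hA₃mono : MonotoneOn A₃ (Set.Ici t₀))
    (hA₃lim : Tendsto A₃ atTop (nhds ℓ))
    (hf : ContinuousOn f (Set.Ici t₀))
    (hg : ∀ t ∈ Set.Ici t₀, HasDerivWithinAt g (A₃' t / A₃ t * g t - (f t) ^ 2) (Set.Ici t₀) t)
    (hgbdd : ∃ M : ℝ, ∀ t ∈ Set.Ici t₀, |g t| ≤ M)
    (hglim : Tendsto g atTop (nhds Ginf)) :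
    ∀ t ∈ Set.Ici t₀,
      IntegrableOn (fun s => (f s) ^ 2 / A₃ s) (Set.Ioi t) ∧
      g t = A₃ t * (Ginf / ℓ + ∫ s in Set.Ioi t, (f s) ^ 2 / A₃ s) := by
  obtain ⟨M, hM⟩ := hgbdd
  set φ : ℝ → ℝ := fun s => f s ^ 2 / A₃ s with hφdef
  set h : ℝ → ℝ := fun s => g s / A₃ s with hhdef
  have hA₃cont : ContinuousOn A₃ (Set.Ici t₀) :=
    fun s hs => (hA₃deriv s hs).continuousWithinAt
  have hφcont : ContinuousOn φ (Set.Ici t₀) :=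
    (hf.pow 2).div hA₃cont (fun s hs => (hA₃pos s hs).ne')
  have hφnonneg : ∀ s ∈ Set.Ici t₀, 0 ≤ φ s :=
    fun s hs => div_nonneg (sq_nonneg _) (hA₃pos s hs).le
  have hhderiv : ∀ s ∈ Set.Ici t₀, HasDerivWithinAt h (-(φ s)) (Set.Ici t₀) s := by
    intro s hs
    have hne := (hA₃pos s hs).ne'
    have := (hg s hs).div (hA₃deriv s hs) hne
    have hrw : -(φ s) = ((A₃' s / A₃ s * g s - f s ^ 2) * A₃ s - g s * A₃' s) / A₃ s ^ 2 := by
      show -(f s ^ 2 / A₃ s) = _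
      field_simp
      ring
    rw [hrw]
    exact this
  have hhcont : ContinuousOn h (Set.Ici t₀) :=
    fun s hs => (hhderiv s hs).continuousWithinAt
  -- fundamental theorem of calculus on [a, b]
  have hFTC : ∀ a b : ℝ, t₀ ≤ a → a ≤ b → ∫ s in a..b, φ s = h a - h b := by
    intro a b ha hab
    have hsub : Set.Icc a b ⊆ Set.Ici t₀ := fun x hx => le_trans ha hx.1
    have hint : IntervalIntegrable (fun s => -(φ s)) volume a b := by
      apply ContinuousOn.intervalIntegrable
      rw [Set.uIcc_of_le hab]
      exact (hφcont.mono hsub).neg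
    have key := intervalIntegral.integral_eq_sub_of_hasDeriv_right_of_le hab
      (hhcont.mono hsub)
      (fun x hx => (hhderiv x (le_trans ha hx.1.le)).mono
        (fun y hy => le_trans (le_trans ha hx.1.le) (le_of_lt hy)))
      hint
    have : ∫ s in a..b, -(φ s) = -∫ s in a..b, φ s := intervalIntegral.integral_neg
    rw [this] at key
    linarith
  have hA₃t₀ := hA₃pos t₀ (Set.mem_Ici.mpr le_rfl)
  have hMnn : 0 ≤ M := le_trans (abs_nonneg _) (hM t₀ (Set.mem_Ici.mpr le_rfl))
  -- uniform bound on |h|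
  have hhbound : ∀ T : ℝ, t₀ ≤ T → |h T| ≤ M / A₃ t₀ := by
    intro T hT
    have hpos := hA₃pos T hT
    have : |h T| = |g T| / A₃ T := by
      rw [hhdef, abs_div, abs_of_pos hpos]
    rw [this]
    exact div_le_div₀ hMnn (hM T hT) hA₃t₀ (hA₃mono (Set.mem_Ici.mpr le_rfl) (Set.mem_Ici.mpr hT) hT)
  have hhlim : Tendsto h atTop (nhds (Ginf / ℓ)) := hglim.div hA₃lim hℓ.ne'
  intro t ht
  -- integrability on each Ioc t T
  have hIoc : ∀ T : ℝ, IntegrableOn φ (Set.Ioc t T) := by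
    intro T
    rcases le_or_gt t T with hTle | hTlt
    · have hsub : Set.Icc t T ⊆ Set.Ici t₀ := fun x hx => le_trans ht hx.1
      exact ((hφcont.mono hsub).integrableOn_Icc).mono_set Set.Ioc_subset_Icc_self
    · rw [Set.Ioc_eq_empty (not_lt.mpr hTlt.le)]
      exact integrableOn_empty
  -- norm bound on interval integrals
  have hbnd : ∀ᶠ T in atTop, (∫ x in t..T, ‖φ x‖) ≤ h t + M / A₃ t₀ := by
    filter_upwards [eventually_ge_atTop t] with T hT
    have hnorm : ∫ x in t..T, ‖φ x‖ = ∫ x in t..T, φ x := by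
      apply intervalIntegral.integral_congr
      intro x hx
      rw [Set.uIcc_of_le hT] at hx
      exact Real.norm_of_nonneg (hφnonneg x (le_trans ht hx.1))
    rw [hnorm, hFTC t T ht hT]
    have := hhbound T (le_trans ht hT)
    have := abs_le.mp this
    linarith [this.1]
  have hInt : IntegrableOn φ (Set.Ioi t) :=
    integrableOn_Ioi_of_intervalIntegral_norm_bounded (h t + M / A₃ t₀) t hIoc tendsto_id hbnd
  refine ⟨hInt, ?_⟩
  -- value of the improper integral
  have hconv : Tendsto (fun T => ∫ x in t..T, φ x) atTop (nhds (∫ s in Set.Ioi t, φ s)) :=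
    intervalIntegral_tendsto_integral_Ioi t hInt tendsto_id
  have hconv' : Tendsto (fun T => ∫ x in t..T, φ x) atTop (nhds (h t - Ginf / ℓ)) := by
    have heq : (fun T => h t - h T) =ᶠ[atTop] fun T => ∫ x in t..T, φ x := by
      filter_upwards [eventually_ge_atTop t] with T hT
      exact (hFTC t T ht hT).symm
    exact Tendsto.congr' heq (tendsto_const_nhds.sub hhlim)
  have hval : ∫ s in Set.Ioi t, φ s = h t - Ginf / ℓ := tendsto_nhds_unique hconv hconv'
  have hAt := hA₃pos t ht
  have : g t = A₃ t * h t := by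
    rw [hhdef]
    field_simp
  rw [hval, this]
  ring
end

section
/- Let t₀ < T ≤ ∞ and let α, β : [t₀, T) → ℝ be continuous. Let (f, g) and (f̂, ĝ) be two solutions on [t₀, T) of the system f' = −α f − f g, g' = −β g − f², with (f(t₀), g(t₀)) ≠ (f̂(t₀), ĝ(t₀)), and suppose g(t₀) ≥ ĝ(t₀) and f̂(t₀) ≥ f(t₀) > 0. Then for all t ∈ (t₀, T): g(t) > ĝ(t) and f̂(t) > f(t). -/
open Set Filter

/-- Monotonicity from a nonnegative derivative within `Icc`. -/
private lemma aux_mono {a b : ℝ} {U W : ℝ → ℝ}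
    (hU' : ∀ x ∈ Icc a b, HasDerivWithinAt U (W x) (Icc a b) x)
    (hnn : ∀ x ∈ Icc a b, 0 ≤ W x) :
    MonotoneOn U (Icc a b) := by
  apply monotoneOn_of_deriv_nonneg (convex_Icc a b)
    (fun x hx => (hU' x hx).continuousWithinAt)
  · intro x hx
    rw [interior_Icc] at hx
    exact (((hU' x (Ioo_subset_Icc_self hx)).hasDerivAt
      (Icc_mem_nhds hx.1 hx.2)).differentiableAt).differentiableWithinAt
  · intro x hx
    rw [interior_Icc] at hx
    rw [((hU' x (Ioo_subset_Icc_self hx)).hasDerivAt (Icc_mem_nhds hx.1 hx.2)).deriv]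
    exact hnn x (Ioo_subset_Icc_self hx)

private lemma aux_strict {a b : ℝ} {V W : ℝ → ℝ}
    (hV' : ∀ x ∈ Icc a b, HasDerivWithinAt V (W x) (Icc a b) x)
    (hpos : ∀ x ∈ Icc a b, 0 < W x) :
    StrictMonoOn V (Icc a b) := by
  apply strictMonoOn_of_deriv_pos (convex_Icc a b)
    (fun x hx => (hV' x hx).continuousWithinAt)
  intro x hx
  rw [interior_Icc] at hx
  rw [((hV' x (Ioo_subset_Icc_self hx)).hasDerivAt (Icc_mem_nhds hx.1 hx.2)).deriv]
  exact hpos x (Ioo_subset_Icc_self hx)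

/-- One step of forward invariance: if `U(c) > 0` and both are nonnegative on `[a,c]`,
then both stay nonnegative a bit past `c`. -/
private lemma aux_step {a b : ℝ} {U V P Q : ℝ → ℝ}
    (hU' : ∀ x ∈ Icc a b, HasDerivWithinAt U (P x * V x) (Icc a b) x)
    (hV' : ∀ x ∈ Icc a b, HasDerivWithinAt V (Q x * U x) (Icc a b) x)
    (hQ : ∀ x ∈ Icc a b, 0 < Q x)
    {c y : ℝ} (hc : c ∈ Ico a b) (hy : c < y)
    (hUc : 0 < U c)
    (hpre : ∀ x ∈ Icc a c, 0 ≤ U x ∧ 0 ≤ V x) :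
    ∃ d ∈ Ioc c y, ∀ x ∈ Icc a d, 0 ≤ U x ∧ 0 ≤ V x := by
  have hcb : c ∈ Icc a b := ⟨hc.1, hc.2.le⟩
  -- continuity of U at c within Icc a b; find ε-ball where U > 0
  have hev : ∀ᶠ z in nhdsWithin c (Icc a b), 0 < U z :=
    ((hU' c hcb).continuousWithinAt).eventually (eventually_gt_nhds hUc)
  rw [eventually_iff, Metric.mem_nhdsWithin_iff] at hev
  obtain ⟨ε, hε, hball⟩ := hev
  set d : ℝ := min (c + ε / 2) (min y b) with hd_def
  have hcd : c < d := lt_min (by linarith) (lt_min hy hc.2)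
  have hdy : d ≤ y := le_trans (min_le_right _ _) (min_le_left _ _)
  have hdb : d ≤ b := le_trans (min_le_right _ _) (min_le_right _ _)
  have hdε : d ≤ c + ε / 2 := min_le_left _ _
  have hsub : Icc c d ⊆ Icc a b := fun x hx => ⟨le_trans hc.1 hx.1, le_trans hx.2 hdb⟩
  have hUpos : ∀ x ∈ Icc c d, 0 < U x := by
    intro x hx
    refine hball ⟨?_, hsub hx⟩
    rw [Metric.mem_ball, Real.dist_eq, abs_of_nonneg (by linarith [hx.1])]
    linarith [hx.2, hdε]
  -- V is strictly monotone on [c, d]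
  have hVmono : MonotoneOn V (Icc c d) := by
    apply aux_mono (W := fun x => Q x * U x)
      (fun x hx => (hV' x (hsub hx)).mono hsub)
    exact fun x hx => (mul_pos (hQ x (hsub hx)) (hUpos x hx)).le
  refine ⟨d, ⟨hcd, hdy⟩, fun x hx => ?_⟩
  rcases le_total x c with h | h
  · exact hpre x ⟨hx.1, h⟩
  · refine ⟨(hUpos x ⟨h, hx.2⟩).le, ?_⟩
    have := hVmono ⟨le_refl c, hcd.le⟩ ⟨h, hx.2⟩ h
    linarith [(hpre c ⟨hc.1, le_refl c⟩).2]

/-- Main abstract lemma: for the cooperative system `U' = P V`, `V' = Q U` with `P, Q > 0`,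
if `U a, V a ≥ 0` and `U a + V a > 0`, then `U b > 0` and `V b > 0`. -/
private lemma aux_pos {a b : ℝ} {U V P Q : ℝ → ℝ} (hab : a < b)
    (hU' : ∀ x ∈ Icc a b, HasDerivWithinAt U (P x * V x) (Icc a b) x)
    (hV' : ∀ x ∈ Icc a b, HasDerivWithinAt V (Q x * U x) (Icc a b) x)
    (hP : ∀ x ∈ Icc a b, 0 < P x) (hQ : ∀ x ∈ Icc a b, 0 < Q x)
    (hU0 : 0 ≤ U a) (hV0 : 0 ≤ V a) (hsum : 0 < U a + V a) :
    0 < U b ∧ 0 < V b := by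
  have hUc : ContinuousOn U (Icc a b) := fun x hx => (hU' x hx).continuousWithinAt
  have hVc : ContinuousOn V (Icc a b) := fun x hx => (hV' x hx).continuousWithinAt
  set s : Set ℝ := {c | ∀ x ∈ Icc a c, 0 ≤ U x ∧ 0 ≤ V x} with hs_def
  -- nonneg invariance on [a, b]
  have hinv : Icc a b ⊆ s := by
    apply IsClosed.Icc_subset_of_forall_exists_gt
    · -- closedness of s ∩ Icc a b
      apply IsSeqClosed.isClosed
      intro cs c hcs hlim
      have hcIcc : c ∈ Icc a b := isClosed_Icc.isSeqClosed (fun n => (hcs n).2) hlim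
      refine ⟨fun x hx => ?_, hcIcc⟩
      have hxb : x ∈ Icc a b := ⟨hx.1, le_trans hx.2 hcIcc.2⟩
      have hmem : ∀ n, min x (cs n) ∈ Icc a (cs n) :=
        fun n => ⟨le_min hx.1 (hcs n).2.1, min_le_right _ _⟩
      have hmemb : ∀ n, min x (cs n) ∈ Icc a b :=
        fun n => ⟨le_min hx.1 (hcs n).2.1, le_trans (min_le_right _ _) (hcs n).2.2⟩
      have hminlim : Tendsto (fun n => min x (cs n)) atTop (nhds x) := by
        have := Filter.Tendsto.min (tendsto_const_nhds (x := x)) hlim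
        rwa [min_eq_left hx.2] at this
      have hminlim' : Tendsto (fun n => min x (cs n)) atTop (nhdsWithin x (Icc a b)) :=
        tendsto_nhdsWithin_iff.2 ⟨hminlim, Eventually.of_forall hmemb⟩
      constructor
      · exact ge_of_tendsto' ((hUc.continuousWithinAt hxb).tendsto.comp hminlim')
          (fun n => ((hcs n).1 _ (hmem n)).1)
      · exact ge_of_tendsto' ((hVc.continuousWithinAt hxb).tendsto.comp hminlim')
          (fun n => ((hcs n).1 _ (hmem n)).2)
    · -- a ∈ s
      intro x hx
      have : x = a := le_antisymm hx.2 hx.1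
      rw [this]; exact ⟨hU0, hV0⟩
    · -- the step
      rintro c ⟨hcs, hc⟩ y hy
      -- U and V are monotone on [a, c], hence U c + V c > 0
      have hsubc : Icc a c ⊆ Icc a b := Icc_subset_Icc_right hc.2.le
      have hUm : MonotoneOn U (Icc a c) := by
        apply aux_mono (W := fun x => P x * V x)
          (fun x hx => (hU' x (hsubc hx)).mono hsubc)
        exact fun x hx => mul_nonneg (hP x (hsubc hx)).le (hcs x hx).2
      have hVm : MonotoneOn V (Icc a c) := by
        apply aux_mono (W := fun x => Q x * U x)
          (fun x hx => (hV' x (hsubc hx)).mono hsubc)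
        exact fun x hx => mul_nonneg (hQ x (hsubc hx)).le (hcs x hx).1
      have hac : a ∈ Icc a c := ⟨le_refl a, hc.1⟩
      have hcc : c ∈ Icc a c := ⟨hc.1, le_refl c⟩
      have hUca : U a ≤ U c := hUm hac hcc hc.1
      have hVca : V a ≤ V c := hVm hac hcc hc.1
      rcases lt_or_ge 0 (U c) with hUc | hUc
      · obtain ⟨d, hd, hdall⟩ := aux_step hU' hV' hQ hc hy hUc hcs
        exact ⟨d, hdall, hd⟩
      · have hVcpos : 0 < V c := by linarith
        have hpre' : ∀ x ∈ Icc a c, 0 ≤ V x ∧ 0 ≤ U x :=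
          fun x hx => ⟨(hcs x hx).2, (hcs x hx).1⟩
        obtain ⟨d, hd, hdall⟩ := aux_step hV' hU' hP hc hy hVcpos hpre'
        exact ⟨d, fun x hx => ⟨(hdall x hx).2, (hdall x hx).1⟩, hd⟩
  have hnn : ∀ x ∈ Icc a b, 0 ≤ U x ∧ 0 ≤ V x :=
    hinv ⟨hab.le, le_refl b⟩
  -- now conclude strict positivity at b
  have hUm : MonotoneOn U (Icc a b) := by
    apply aux_mono (W := fun x => P x * V x) hU'
    exact fun x hx => mul_nonneg (hP x hx).le (hnn x hx).2
  have hVm : MonotoneOn V (Icc a b) := by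
    apply aux_mono (W := fun x => Q x * U x) hV'
    exact fun x hx => mul_nonneg (hQ x hx).le (hnn x hx).1
  have hab' : a ∈ Icc a b := ⟨le_refl a, hab.le⟩
  have hbb : b ∈ Icc a b := ⟨hab.le, le_refl b⟩
  rcases lt_or_ge 0 (U a) with hUa | hUa
  · have hUall : ∀ x ∈ Icc a b, 0 < U x :=
      fun x hx => lt_of_lt_of_le hUa (hUm hab' hx hx.1)
    have hVs : StrictMonoOn V (Icc a b) := by
      apply aux_strict (W := fun x => Q x * U x) hV'
      exact fun x hx => mul_pos (hQ x hx) (hUall x hx)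
    exact ⟨hUall b hbb, lt_of_le_of_lt hV0 (hVs hab' hbb hab)⟩
  · have hVa : 0 < V a := by linarith
    have hVall : ∀ x ∈ Icc a b, 0 < V x :=
      fun x hx => lt_of_lt_of_le hVa (hVm hab' hx hx.1)
    have hUs : StrictMonoOn U (Icc a b) := by
      apply aux_strict (W := fun x => P x * V x) hU'
      exact fun x hx => mul_pos (hP x hx) (hVall x hx)
    exact ⟨lt_of_le_of_lt hU0 (hUs hab' hbb hab), hVall b hbb⟩
/-- FTC helper: antiderivative within `Icc a b` of a function continuous on `Icc a b`. -/
private lemma ftc_ext {a b : ℝ} (hab : a ≤ b) {c : ℝ → ℝ} (hc : ContinuousOn c (Icc a b)) :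
    ∃ A : ℝ → ℝ, A a = 0 ∧ ∀ x ∈ Icc a b, HasDerivWithinAt A (c x) (Icc a b) x := by
  set e : ℝ → ℝ := fun x => c (projIcc a b hab x) with he_def
  have he : Continuous e := (continuousOn_iff_continuous_restrict.mp hc).comp continuous_projIcc
  refine ⟨fun x => ∫ τ in a..x, e τ, intervalIntegral.integral_same, fun x hx => ?_⟩
  have h1 := ((he.integral_hasStrictDerivAt a x).hasDerivAt).hasDerivWithinAt (s := Icc a b)
  have h2 : e x = c x := by rw [he_def]; simp [projIcc_of_mem hab hx]
  rwa [h2] at h1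

/-- Integrating-factor helper: if `f' + c f = 0` and `A' = c`, then `f · exp A` is constant. -/
private lemma const_aux {a b : ℝ} {f f' A c : ℝ → ℝ}
    (hf : ∀ x ∈ Icc a b, HasDerivWithinAt f (f' x) (Icc a b) x)
    (hA : ∀ x ∈ Icc a b, HasDerivWithinAt A (c x) (Icc a b) x)
    (hrel : ∀ x ∈ Icc a b, f' x + c x * f x = 0) :
    ∀ x ∈ Icc a b, f x * Real.exp (A x) = f a * Real.exp (A a) := by
  apply constant_of_has_deriv_right_zero
  · have hfc : ContinuousOn f (Icc a b) := fun x hx => (hf x hx).continuousWithinAt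
    have hAc : ContinuousOn A (Icc a b) := fun x hx => (hA x hx).continuousWithinAt
    exact hfc.mul (Real.continuous_exp.comp_continuousOn hAc)
  · intro x hx
    have hxm : x ∈ Icc a b := ⟨hx.1, hx.2.le⟩
    have h1 := (hf x hxm).mul ((hA x hxm).exp)
    have h2 : f' x * Real.exp (A x) + f x * (Real.exp (A x) * c x)
        = (f' x + c x * f x) * Real.exp (A x) := by ring
    rw [h2, hrel x hxm, zero_mul] at h1
    exact (h1.mono (Icc_subset_Icc_left hx.1)).mono_of_mem_nhdsWithin
      (Icc_mem_nhdsGE_of_mem ⟨le_refl x, hx.2⟩)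

/-- Comparison of two solutions of `f' = −α f − f g`, `g' = −β g − f²`
on `[t₀, T)` with `g(t₀) ≥ ĝ(t₀)`, `f̂(t₀) ≥ f(t₀) > 0` and distinct initial data:
then `g > ĝ` and `f̂ > f` on `(t₀, T)`. -/
theorem comparison_lemma (t₀ : ℝ) (T : EReal) (hT : (t₀ : EReal) < T)
    (α β f g fh gh : ℝ → ℝ)
    (hα : ContinuousOn α {t : ℝ | t₀ ≤ t ∧ (t : EReal) < T})
    (hβ : ContinuousOn β {t : ℝ | t₀ ≤ t ∧ (t : EReal) < T})
    (hf : ∀ t, t₀ ≤ t → (t : EReal) < T →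
      HasDerivWithinAt f (-(α t) * f t - f t * g t) {t : ℝ | t₀ ≤ t ∧ (t : EReal) < T} t)
    (hg : ∀ t, t₀ ≤ t → (t : EReal) < T →
      HasDerivWithinAt g (-(β t) * g t - (f t) ^ 2) {t : ℝ | t₀ ≤ t ∧ (t : EReal) < T} t)
    (hfh : ∀ t, t₀ ≤ t → (t : EReal) < T →
      HasDerivWithinAt fh (-(α t) * fh t - fh t * gh t) {t : ℝ | t₀ ≤ t ∧ (t : EReal) < T} t)
    (hgh : ∀ t, t₀ ≤ t → (t : EReal) < T →
      HasDerivWithinAt gh (-(β t) * gh t - (fh t) ^ 2) {t : ℝ | t₀ ≤ t ∧ (t : EReal) < T} t)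
    (hne : (f t₀, g t₀) ≠ (fh t₀, gh t₀))
    (hg0 : g t₀ ≥ gh t₀) (hf0 : fh t₀ ≥ f t₀) (hfpos : f t₀ > 0) :
    ∀ t, t₀ < t → (t : EReal) < T → g t > gh t ∧ fh t > f t := by
  intro t ht htT
  have hJS : Icc t₀ t ⊆ {t : ℝ | t₀ ≤ t ∧ (t : EReal) < T} := fun x hx =>
    ⟨hx.1, lt_of_le_of_lt (EReal.coe_le_coe_iff.2 hx.2) htT⟩
  -- derivatives restricted to J = Icc t₀ t
  have hfJ : ∀ x ∈ Icc t₀ t,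
      HasDerivWithinAt f (-(α x) * f x - f x * g x) (Icc t₀ t) x :=
    fun x hx => (hf x (hJS hx).1 (hJS hx).2).mono hJS
  have hgJ : ∀ x ∈ Icc t₀ t,
      HasDerivWithinAt g (-(β x) * g x - (f x) ^ 2) (Icc t₀ t) x :=
    fun x hx => (hg x (hJS hx).1 (hJS hx).2).mono hJS
  have hfhJ : ∀ x ∈ Icc t₀ t,
      HasDerivWithinAt fh (-(α x) * fh x - fh x * gh x) (Icc t₀ t) x :=
    fun x hx => (hfh x (hJS hx).1 (hJS hx).2).mono hJS
  have hghJ : ∀ x ∈ Icc t₀ t,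
      HasDerivWithinAt gh (-(β x) * gh x - (fh x) ^ 2) (Icc t₀ t) x :=
    fun x hx => (hgh x (hJS hx).1 (hJS hx).2).mono hJS
  -- continuity of coefficients on J
  have hgc : ContinuousOn g (Icc t₀ t) := fun x hx => (hgJ x hx).continuousWithinAt
  have hghc : ContinuousOn gh (Icc t₀ t) := fun x hx => (hghJ x hx).continuousWithinAt
  have hc1 : ContinuousOn (fun τ => α τ + g τ) (Icc t₀ t) := (hα.mono hJS).add hgc
  have hc2 : ContinuousOn (fun τ => α τ + gh τ) (Icc t₀ t) := (hα.mono hJS).add hghc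
  have hc3 : ContinuousOn β (Icc t₀ t) := hβ.mono hJS
  obtain ⟨A, hA0, hA⟩ := ftc_ext ht.le hc1
  obtain ⟨Ah, hAh0, hAh⟩ := ftc_ext ht.le hc2
  obtain ⟨B, hB0, hB⟩ := ftc_ext ht.le hc3
  -- positivity of f and fh on J
  have hfconst := const_aux hfJ hA (fun x hx => by ring)
  have hfpos' : ∀ x ∈ Icc t₀ t, 0 < f x := by
    intro x hx
    have h1 := hfconst x hx
    rw [hA0, Real.exp_zero, mul_one] at h1
    nlinarith [Real.exp_pos (A x)]
  have hfhconst := const_aux hfhJ hAh (fun x hx => by ring)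
  have hfhpos' : ∀ x ∈ Icc t₀ t, 0 < fh x := by
    intro x hx
    have h1 := hfhconst x hx
    rw [hAh0, Real.exp_zero, mul_one] at h1
    nlinarith [Real.exp_pos (Ah x)]
  -- the cooperative system for U = (g - gh) e^B, V = (fh - f) e^A
  have hU' : ∀ x ∈ Icc t₀ t, HasDerivWithinAt (fun y => (g y - gh y) * Real.exp (B y))
      ((fun y => (fh y + f y) * Real.exp (B y - A y)) x
        * (fun y => (fh y - f y) * Real.exp (A y)) x) (Icc t₀ t) x := by
    intro x hx
    have h1 : HasDerivWithinAt (fun y => (g y - gh y) * Real.exp (B y)) _ _ x :=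
      ((hgJ x hx).sub (hghJ x hx)).mul ((hB x hx).exp)
    convert h1 using 1
    simp only [Pi.sub_apply]
    rw [Real.exp_sub]
    field_simp
    ring
  have hV' : ∀ x ∈ Icc t₀ t, HasDerivWithinAt (fun y => (fh y - f y) * Real.exp (A y))
      ((fun y => fh y * Real.exp (A y - B y)) x
        * (fun y => (g y - gh y) * Real.exp (B y)) x) (Icc t₀ t) x := by
    intro x hx
    have h1 : HasDerivWithinAt (fun y => (fh y - f y) * Real.exp (A y)) _ _ x :=
      ((hfhJ x hx).sub (hfJ x hx)).mul ((hA x hx).exp)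
    convert h1 using 1
    simp only [Pi.sub_apply]
    rw [Real.exp_sub]
    field_simp
    ring
  have hP : ∀ x ∈ Icc t₀ t, 0 < (fun y => (fh y + f y) * Real.exp (B y - A y)) x := by
    intro x hx
    exact mul_pos (by linarith [hfpos' x hx, hfhpos' x hx]) (Real.exp_pos _)
  have hQ : ∀ x ∈ Icc t₀ t, 0 < (fun y => fh y * Real.exp (A y - B y)) x := by
    intro x hx
    exact mul_pos (hfhpos' x hx) (Real.exp_pos _)
  have hU0 : 0 ≤ (fun y => (g y - gh y) * Real.exp (B y)) t₀ := by
    simp only [hB0, Real.exp_zero, mul_one]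
    linarith
  have hV0 : 0 ≤ (fun y => (fh y - f y) * Real.exp (A y)) t₀ := by
    simp only [hA0, Real.exp_zero, mul_one]
    linarith
  have hsum : 0 < (fun y => (g y - gh y) * Real.exp (B y)) t₀
      + (fun y => (fh y - f y) * Real.exp (A y)) t₀ := by
    simp only [hA0, hB0, Real.exp_zero, mul_one]
    have hor : f t₀ ≠ fh t₀ ∨ g t₀ ≠ gh t₀ := by
      by_contra h
      push_neg at h
      exact hne (by rw [Prod.mk.injEq]; exact ⟨h.1, h.2⟩)
    rcases hor with h | h
    · have : f t₀ < fh t₀ := lt_of_le_of_ne hf0 h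
      linarith
    · have : gh t₀ < g t₀ := lt_of_le_of_ne hg0 (Ne.symm h)
      linarith
  have hfin := aux_pos ht hU' hV' hP hQ hU0 hV0 hsum
  have h1 : 0 < (g t - gh t) * Real.exp (B t) := hfin.1
  have h2 : 0 < (fh t - f t) * Real.exp (A t) := hfin.2
  constructor
  · nlinarith [Real.exp_pos (B t)]
  · nlinarith [Real.exp_pos (A t)]
end

section
/- Let A₃ : [t₀, ∞) → (0, ∞) be differentiable and nondecreasing with limit ℓ ∈ (0, ∞), and let α : [t₀, ∞) → ℝ be continuous and bounded. Consider the system f' = −α f − f g, g' = (A₃'/A₃) g − f². Suppose (f̂, ĝ) is a bounded solution on [t₀, ∞) with ĝ(t) → Ĝ_∞ as t → ∞, and (f, g) is a solution with (f(t₀), g(t₀)) ≠ (f̂(t₀), ĝ(t₀)), g(t₀) ≥ ĝ(t₀), and f̂(t₀) ≥ f(t₀) > 0. Then (f, g) extends to a bounded solution on all of [t₀, ∞), g(t) converges to a limit G_∞ as t → ∞, and G_∞ > Ĝ_∞. -/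
open Filter Set Metric Topology

section Helpers

variable {E : Type*} [NormedAddCommGroup E] [NormedSpace ℝ E]

lemma hasDerivWithinAt_singleton' (f : ℝ → E) (d : E) (x : ℝ) :
    HasDerivWithinAt f d {x} x := by
  rw [hasDerivWithinAt_iff_tendsto_slope]
  simp [Set.diff_singleton_eq_self]

lemma monoOn_Icc {a b : ℝ} {y y' : ℝ → ℝ}
    (hc : ContinuousOn y (Icc a b))
    (hd : ∀ t ∈ Ioo a b, HasDerivAt y (y' t) t)
    (hnn : ∀ t ∈ Ioo a b, 0 ≤ y' t) : MonotoneOn y (Icc a b) := by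
  apply monotoneOn_of_deriv_nonneg (convex_Icc a b) hc
  · rw [interior_Icc]
    exact fun t ht => (hd t ht).differentiableAt.differentiableWithinAt
  · rw [interior_Icc]
    intro t ht; rw [(hd t ht).deriv]; exact hnn t ht

lemma antiOn_Icc {a b : ℝ} {y y' : ℝ → ℝ}
    (hc : ContinuousOn y (Icc a b))
    (hd : ∀ t ∈ Ioo a b, HasDerivAt y (y' t) t)
    (hnp : ∀ t ∈ Ioo a b, y' t ≤ 0) : AntitoneOn y (Icc a b) := by
  apply antitoneOn_of_deriv_nonpos (convex_Icc a b) hc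
  · rw [interior_Icc]
    exact fun t ht => (hd t ht).differentiableAt.differentiableWithinAt
  · rw [interior_Icc]
    intro t ht; rw [(hd t ht).deriv]; exact hnp t ht

/-- positivity preservation for a scalar linear ODE with bounded coefficient -/
lemma pos_on_Icc {a b K : ℝ} {y c : ℝ → ℝ}
    (hc : ContinuousOn y (Icc a b))
    (hd : ∀ t ∈ Ioo a b, HasDerivAt y (c t * y t) t)
    (hK : ∀ t ∈ Icc a b, |c t| ≤ K)
    (h0 : 0 < y a) : ∀ t ∈ Icc a b, 0 < y t := by
  by_contra hcon
  push_neg at hcon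
  obtain ⟨t₁, ht₁, hy₁⟩ := hcon
  have hab : a ≤ b := nonempty_Icc.mp ⟨t₁, ht₁⟩
  set S : Set ℝ := Icc a b ∩ y ⁻¹' (Iic 0) with hS
  have hSne : S.Nonempty := ⟨t₁, ht₁, hy₁⟩
  have hScl : IsClosed S := hc.preimage_isClosed_of_isClosed isClosed_Icc isClosed_Iic
  have hSbdd : BddBelow S := ⟨a, fun t ht => ht.1.1⟩
  set s := sInf S with hs
  have hsS : s ∈ S := hScl.csInf_mem hSne hSbdd
  have hsa : a < s := by
    rcases lt_or_eq_of_le hsS.1.1 with h | h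
    · exact h
    · exact absurd hsS.2 (by simp [← h, not_le.mpr h0])
  have hpos : ∀ t ∈ Ico a s, 0 < y t := by
    intro t ht
    by_contra hyt
    exact absurd (csInf_le hSbdd ⟨⟨ht.1, ht.2.le.trans hsS.1.2⟩, not_lt.mp hyt⟩)
      (not_le.mpr ht.2)
  have hys : 0 ≤ y s := by
    have hcl : s ∈ closure (Ico a s) := by
      rw [closure_Ico (ne_of_lt hsa)]; exact ⟨hsa.le, le_rfl⟩
    have hten : Tendsto y (𝓝[Ico a s] s) (𝓝 (y s)) :=
      (hc.continuousWithinAt hsS.1).mono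
        (fun r hr => ⟨hr.1, hr.2.le.trans hsS.1.2⟩)
    haveI : (𝓝[Ico a s] s).NeBot := mem_closure_iff_nhdsWithin_neBot.mp hcl
    exact ge_of_tendsto hten (eventually_nhdsWithin_of_forall
      fun r hr => (hpos r hr).le)
  have hynn : ∀ t ∈ Icc a s, 0 ≤ y t := by
    intro t ht
    rcases lt_or_eq_of_le ht.2 with h | h
    · exact (hpos t ⟨ht.1, h⟩).le
    · rw [h]; exact hys
  -- z := y * exp (K * t) is monotone on [a, s]
  have hKnn : 0 ≤ K := le_trans (abs_nonneg _) (hK a ⟨le_rfl, hab⟩)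
  set z : ℝ → ℝ := fun t => y t * Real.exp (K * t) with hz
  have hzc : ContinuousOn z (Icc a s) :=
    (hc.mono (Icc_subset_Icc_right hsS.1.2)).mul
      (Real.continuous_exp.comp (continuous_const.mul continuous_id)).continuousOn
  have hzd : ∀ t ∈ Ioo a s, HasDerivAt z
      (c t * y t * Real.exp (K * t) + y t * (Real.exp (K * t) * K)) t := by
    intro t ht
    have ht' : t ∈ Ioo a b := ⟨ht.1, lt_of_lt_of_le ht.2 hsS.1.2⟩
    have he : HasDerivAt (fun t => Real.exp (K * t)) (Real.exp (K * t) * K) t := by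
      simpa using (((hasDerivAt_id t).const_mul K).exp)
    exact (hd t ht').mul he
  have hzm : MonotoneOn z (Icc a s) := by
    apply monoOn_Icc hzc hzd
    intro t ht
    have ht'' : t ∈ Icc a b := ⟨ht.1.le, ht.2.le.trans hsS.1.2⟩
    have hyt : 0 ≤ y t := (hpos t ⟨ht.1.le, ht.2⟩).le
    have : c t * y t * Real.exp (K * t) + y t * (Real.exp (K * t) * K)
        = y t * Real.exp (K * t) * (c t + K) := by ring
    rw [this]
    apply mul_nonneg (mul_nonneg hyt (Real.exp_pos _).le)
    have := hK t ht''
    linarith [neg_abs_le (c t)]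
  have := hzm ⟨le_rfl, hsa.le⟩ ⟨hsa.le, le_rfl⟩ hsa.le
  have hza : 0 < z a := mul_pos h0 (Real.exp_pos _)
  have hzs : 0 < z s := lt_of_lt_of_le hza this
  have : 0 < y s := by
    have he := Real.exp_pos (K * s)
    have hzs' : 0 < y s * Real.exp (K * s) := hzs
    nlinarith
  exact absurd hsS.2 (not_le.mpr this)


/-- positivity preservation for a cooperative pair -/
lemma pair_pos_on_Icc {a b : ℝ} {y z y' z' : ℝ → ℝ}
    (hyc : ContinuousOn y (Icc a b)) (hzc : ContinuousOn z (Icc a b))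
    (hyd : ∀ t ∈ Ioo a b, HasDerivAt y (y' t) t)
    (hzd : ∀ t ∈ Ioo a b, HasDerivAt z (z' t) t)
    (himp : ∀ t ∈ Ioo a b, 0 ≤ y t → 0 ≤ z t → 0 ≤ y' t ∧ 0 ≤ z' t)
    (hy0 : 0 < y a) (hz0 : 0 < z a) :
    ∀ t ∈ Icc a b, 0 < y t ∧ 0 < z t := by
  by_contra hcon
  push_neg at hcon
  obtain ⟨t₁, ht₁, hy₁⟩ := hcon
  have hmin : min (y t₁) (z t₁) ≤ 0 := by
    by_cases h : 0 < y t₁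
    · exact le_trans (min_le_right _ _) (hy₁ h)
    · exact le_trans (min_le_left _ _) (not_lt.mp h)
  have hab : a ≤ b := nonempty_Icc.mp ⟨t₁, ht₁⟩
  have hmc : ContinuousOn (fun t => min (y t) (z t)) (Icc a b) :=
    fun t ht => (hyc t ht).min (hzc t ht)
  set S : Set ℝ := Icc a b ∩ (fun t => min (y t) (z t)) ⁻¹' (Iic 0) with hS
  have hSne : S.Nonempty := ⟨t₁, ht₁, hmin⟩
  have hScl : IsClosed S := hmc.preimage_isClosed_of_isClosed isClosed_Icc isClosed_Iic
  have hSbdd : BddBelow S := ⟨a, fun t ht => ht.1.1⟩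
  set s := sInf S with hs
  have hsS : s ∈ S := hScl.csInf_mem hSne hSbdd
  have hsa : a < s := by
    rcases lt_or_eq_of_le hsS.1.1 with h | h
    · exact h
    · exfalso
      have : (0:ℝ) < min (y a) (z a) := lt_min hy0 hz0
      rw [h] at this
      exact absurd hsS.2 (not_le.mpr this)
  have hpos : ∀ t ∈ Ico a s, 0 < min (y t) (z t) := by
    intro t ht
    by_contra hyt
    exact absurd (csInf_le hSbdd ⟨⟨ht.1, ht.2.le.trans hsS.1.2⟩, not_lt.mp hyt⟩)
      (not_le.mpr ht.2)
  have hys : 0 ≤ min (y s) (z s) := by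
    have hcl : s ∈ closure (Ico a s) := by
      rw [closure_Ico (ne_of_lt hsa)]; exact ⟨hsa.le, le_rfl⟩
    have hten : Tendsto (fun t => min (y t) (z t)) (𝓝[Ico a s] s)
        (𝓝 (min (y s) (z s))) :=
      (hmc.continuousWithinAt hsS.1).mono
        (fun r hr => ⟨hr.1, hr.2.le.trans hsS.1.2⟩)
    haveI : (𝓝[Ico a s] s).NeBot := mem_closure_iff_nhdsWithin_neBot.mp hcl
    exact ge_of_tendsto hten (eventually_nhdsWithin_of_forall
      fun r hr => (hpos r hr).le)
  have hynn : ∀ t ∈ Icc a s, 0 ≤ y t ∧ 0 ≤ z t := by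
    intro t ht
    rcases lt_or_eq_of_le ht.2 with h | h
    · have := hpos t ⟨ht.1, h⟩
      exact ⟨(lt_min_iff.mp this).1.le, (lt_min_iff.mp this).2.le⟩
    · rw [h]; exact ⟨le_trans hys (min_le_left _ _), le_trans hys (min_le_right _ _)⟩
  have hIoo : Ioo a s ⊆ Ioo a b := fun r hr => ⟨hr.1, lt_of_lt_of_le hr.2 hsS.1.2⟩
  have hicc : Icc a s ⊆ Icc a b := Icc_subset_Icc_right hsS.1.2
  have hym : MonotoneOn y (Icc a s) := by
    apply monoOn_Icc (hyc.mono hicc) (fun t ht => hyd t (hIoo ht))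
    intro t ht
    exact (himp t (hIoo ht) (hynn t (Ioo_subset_Icc_self ht)).1
      (hynn t (Ioo_subset_Icc_self ht)).2).1
  have hzm : MonotoneOn z (Icc a s) := by
    apply monoOn_Icc (hzc.mono hicc) (fun t ht => hzd t (hIoo ht))
    intro t ht
    exact (himp t (hIoo ht) (hynn t (Ioo_subset_Icc_self ht)).1
      (hynn t (Ioo_subset_Icc_self ht)).2).2
  have h1 := hym ⟨le_rfl, hsa.le⟩ ⟨hsa.le, le_rfl⟩ hsa.le
  have h2 := hzm ⟨le_rfl, hsa.le⟩ ⟨hsa.le, le_rfl⟩ hsa.le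
  have : 0 < min (y s) (z s) := lt_min (lt_of_lt_of_le hy0 h1) (lt_of_lt_of_le hz0 h2)
  exact absurd hsS.2 (not_le.mpr this)

/-- gluing two solutions at a junction point -/
lemma glue_sol {a c b : ℝ} {p q : ℝ → E} {d : ℝ → E}
    (hac : a ≤ c) (hcb : c ≤ b)
    (hp : ∀ t ∈ Icc a c, HasDerivWithinAt p (d t) (Icc a c) t)
    (hq : ∀ t ∈ Icc c b, HasDerivWithinAt q (d t) (Icc c b) t)
    (hpq : p c = q c) :
    ∀ t ∈ Icc a b, HasDerivWithinAt (fun t => if t ≤ c then p t else q t)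
      (d t) (Icc a b) t := by
  intro t ht
  set r : ℝ → E := fun t => if t ≤ c then p t else q t with hr
  by_cases htc : t ≤ c
  · rcases lt_or_eq_of_le htc with hlt | heq
    · have h1 : HasDerivWithinAt p (d t) (Icc a b ∩ Iio c) t :=
        (hp t ⟨ht.1, htc⟩).mono (fun s hs => ⟨hs.1.1, le_of_lt (hs.2 : s < c)⟩)
      have h2 : HasDerivWithinAt r (d t) (Icc a b ∩ Iio c) t := by
        apply h1.congr
        · intro s hs
          have hsc : s ≤ c := le_of_lt (hs.2 : s < c)
          simp [hr, hsc]
        · simp [hr, htc]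
      exact h2.mono_of_mem_nhdsWithin
        (inter_mem_nhdsWithin _ (Iio_mem_nhds hlt))
    · -- t = c : union of the two one-sided derivatives
      subst heq
      have h1 : HasDerivWithinAt r (d t) (Icc a t) t := by
        apply (hp t ⟨ht.1, le_rfl⟩).congr
        · intro s hs; simp [hr, hs.2]
        · simp [hr]
      have h2 : HasDerivWithinAt r (d t) (Icc t b) t := by
        apply (hq t ⟨le_rfl, ht.2⟩).congr
        · intro s hs
          rcases lt_or_eq_of_le hs.1 with h | h
          · simp [hr, not_le.mpr h]
          · simp [hr, ← h, hpq]
        · simp [hr, hpq]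
      have := h1.union h2
      rwa [Icc_union_Icc_eq_Icc ht.1 ht.2] at this
  · push_neg at htc
    have h1 : HasDerivWithinAt q (d t) (Icc a b ∩ Ioi c) t :=
      (hq t ⟨htc.le, ht.2⟩).mono (fun s hs => ⟨le_of_lt (hs.2 : c < s), hs.1.2⟩)
    have h2 : HasDerivWithinAt r (d t) (Icc a b ∩ Ioi c) t := by
      apply h1.congr
      · intro s hs
        have hsc : ¬ s ≤ c := not_le.mpr (hs.2 : c < s)
        simp [hr, hsc]
      · simp [hr, not_le.mpr htc]
    exact h2.mono_of_mem_nhdsWithin (inter_mem_nhdsWithin _ (Ioi_mem_nhds htc))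

/-- derivative within `Ici t₀` of a function monotone on `Ici t₀` is nonnegative -/
lemma derivIci_nonneg_of_mono {t₀ t d : ℝ} {A : ℝ → ℝ} (ht : t₀ ≤ t)
    (hd : HasDerivWithinAt A d (Ici t₀) t) (hm : MonotoneOn A (Ici t₀)) :
    0 ≤ d := by
  rw [hasDerivWithinAt_iff_tendsto_slope] at hd
  haveI : (𝓝[Ici t₀ \ {t}] t).NeBot := by
    apply Filter.neBot_of_le (f := 𝓝[Ioi t] t)
    apply nhdsWithin_mono
    intro s hs
    exact ⟨le_trans ht (le_of_lt hs), ne_of_gt hs⟩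
  apply ge_of_tendsto hd
  apply eventually_nhdsWithin_of_forall
  intro s hs
  rw [slope_def_field]
  rcases lt_or_ge t s with h | h
  · apply div_nonneg _ (by linarith : (0:ℝ) ≤ s - t)
    simp only [sub_nonneg]
    exact hm (mem_Ici.mpr ht) hs.1 h.le
  · have hst : s < t := lt_of_le_of_ne h (hs.2 : s ≠ t)
    apply div_nonneg_iff.mpr
    right
    constructor
    · simp only [sub_nonpos]
      exact hm hs.1 (mem_Ici.mpr ht) hst.le
    · linarith

end Helpers

section Invariance

/-- The invariant-region lemma for the transformed system. -/
lemma invariance (t₀ b Mα Mh : ℝ)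
    (A₃ A₃' α fh gh : ℝ → ℝ)
    (hA₃pos : ∀ t ∈ Set.Ici t₀, 0 < A₃ t)
    (hA₃deriv : ∀ t ∈ Set.Ici t₀, HasDerivWithinAt A₃ (A₃' t) (Set.Ici t₀) t)
    (hαbdd : ∀ t ∈ Set.Ici t₀, |α t| ≤ Mα)
    (hαcont : ContinuousOn α (Set.Ici t₀))
    (hfh : ∀ t ∈ Set.Ici t₀,
      HasDerivWithinAt fh (-(α t) * fh t - fh t * gh t) (Set.Ici t₀) t)
    (hgh : ∀ t ∈ Set.Ici t₀,
      HasDerivWithinAt gh (A₃' t / A₃ t * gh t - (fh t) ^ 2) (Set.Ici t₀) t)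
    (hhbdd : ∀ t ∈ Set.Ici t₀, |fh t| ≤ Mh ∧ |gh t| ≤ Mh)
    (hfhpos : ∀ t ∈ Set.Ici t₀, 0 < fh t)
    (f₀ u₀ : ℝ) (hf₀ : 0 < f₀) (hf₀le : f₀ ≤ fh t₀) (hu₀ : gh t₀ ≤ u₀ * A₃ t₀)
    (p : ℝ → ℝ × ℝ)
    (hp0 : p t₀ = (f₀, u₀))
    (hpd : ∀ t ∈ Icc t₀ b, HasDerivWithinAt p
      (-(α t) * (p t).1 - A₃ t * (p t).1 * (p t).2, -((p t).1) ^ 2 / A₃ t) (Icc t₀ b) t) :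
    ∀ t ∈ Icc t₀ b, (0 < (p t).1 ∧ (p t).1 ≤ fh t) ∧
      gh t ≤ (p t).2 * A₃ t ∧ (p t).2 ≤ u₀ := by
  rcases le_or_gt t₀ b with hb | hb; swap
  · intro t ht; exact absurd (ht.1.trans ht.2) (not_le.mpr hb)
  set x : ℝ → ℝ := fun t => (p t).1 with hxdef
  set u : ℝ → ℝ := fun t => (p t).2 with hudef
  have hIccIci : Icc t₀ b ⊆ Ici t₀ := fun t ht => ht.1
  have hpc : ContinuousOn p (Icc t₀ b) := fun t ht => (hpd t ht).continuousWithinAt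
  have hxc : ContinuousOn x (Icc t₀ b) := continuous_fst.comp_continuousOn hpc
  have huc : ContinuousOn u (Icc t₀ b) := continuous_snd.comp_continuousOn hpc
  have hx0 : x t₀ = f₀ := by rw [hxdef]; simp [hp0]
  have hu0 : u t₀ = u₀ := by rw [hudef]; simp [hp0]
  have hpdA : ∀ t ∈ Ioo t₀ b, HasDerivAt p
      (-(α t) * x t - A₃ t * x t * u t, -(x t) ^ 2 / A₃ t) t := fun t ht =>
    (hpd t (Ioo_subset_Icc_self ht)).hasDerivAt (Icc_mem_nhds ht.1 ht.2)
  have hxd : ∀ t ∈ Ioo t₀ b, HasDerivAt x (-(α t) * x t - A₃ t * x t * u t) t := by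
    intro t ht
    have h := ((ContinuousLinearMap.fst ℝ ℝ ℝ).hasFDerivAt).comp_hasDerivAt t (hpdA t ht)
    exact h
  have hud : ∀ t ∈ Ioo t₀ b, HasDerivAt u (-(x t) ^ 2 / A₃ t) t := by
    intro t ht
    have h := ((ContinuousLinearMap.snd ℝ ℝ ℝ).hasFDerivAt).comp_hasDerivAt t (hpdA t ht)
    simp at h; exact h
  have hA₃d : ∀ t ∈ Ioo t₀ b, HasDerivAt A₃ (A₃' t) t := fun t ht =>
    (hA₃deriv t (le_of_lt ht.1)).hasDerivAt (Ici_mem_nhds ht.1)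
  have hA₃c : ContinuousOn A₃ (Icc t₀ b) :=
    fun t ht => ((hA₃deriv t ht.1).continuousWithinAt).mono hIccIci
  have hA₃p : ∀ t ∈ Icc t₀ b, 0 < A₃ t := fun t ht => hA₃pos t ht.1
  set G : ℝ → ℝ := fun t => u t * A₃ t with hGdef
  have hGc : ContinuousOn G (Icc t₀ b) := huc.mul hA₃c
  have hGd : ∀ t ∈ Ioo t₀ b,
      HasDerivAt G (-(x t) ^ 2 / A₃ t * A₃ t + u t * A₃' t) t := fun t ht =>
    (hud t ht).mul (hA₃d t ht)
  -- positivity of x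
  obtain ⟨BG, hBG⟩ := isCompact_Icc.exists_bound_of_continuousOn hGc
  have hxpos : ∀ t ∈ Icc t₀ b, 0 < x t := by
    apply pos_on_Icc (c := fun t => -(α t + G t)) (K := Mα + BG) hxc
    · intro t ht
      have h := hxd t ht
      have : -(α t) * x t - A₃ t * x t * u t = -(α t + G t) * x t := by
        simp only [hGdef]; ring
      rwa [this] at h
    · intro t ht
      have h1 := hαbdd t ht.1
      have h2 := hBG t ht
      rw [Real.norm_eq_abs] at h2
      calc |-(α t + G t)| = |α t + G t| := abs_neg _
        _ ≤ |α t| + |G t| := abs_add_le _ _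
        _ ≤ Mα + BG := add_le_add h1 h2
    · rw [hx0]; exact hf₀
  -- u is nonincreasing
  have huanti : AntitoneOn u (Icc t₀ b) := by
    apply antiOn_Icc huc hud
    intro t ht
    have h1 : (0:ℝ) ≤ x t ^ 2 / A₃ t :=
      div_nonneg (sq_nonneg _) (hA₃p t (Ioo_subset_Icc_self ht)).le
    have : -(x t) ^ 2 / A₃ t = -(x t ^ 2 / A₃ t) := by ring
    rw [this]; linarith
  have huled : ∀ t ∈ Icc t₀ b, u t ≤ u₀ := by
    intro t ht
    rw [← hu0]
    exact huanti (left_mem_Icc.mpr hb) ht ht.1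
  -- hat solution facts on the interval
  have hfhc : ContinuousOn fh (Icc t₀ b) :=
    fun t ht => ((hfh t ht.1).continuousWithinAt).mono hIccIci
  have hghc : ContinuousOn gh (Icc t₀ b) :=
    fun t ht => ((hgh t ht.1).continuousWithinAt).mono hIccIci
  have hfhd : ∀ t ∈ Ioo t₀ b, HasDerivAt fh (-(α t) * fh t - fh t * gh t) t :=
    fun t ht => (hfh t (le_of_lt ht.1)).hasDerivAt (Ici_mem_nhds ht.1)
  have hghd : ∀ t ∈ Ioo t₀ b, HasDerivAt gh (A₃' t / A₃ t * gh t - fh t ^ 2) t :=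
    fun t ht => (hgh t (le_of_lt ht.1)).hasDerivAt (Ici_mem_nhds ht.1)
  -- the comparison pair
  set K0 : ℝ := Mα + Mh with hK0def
  set φ : ℝ → ℝ := fun t => fh t - x t with hφdef
  set w : ℝ → ℝ := fun t => (G t - gh t) / A₃ t with hwdef
  have hφc : ContinuousOn φ (Icc t₀ b) := hfhc.sub hxc
  have hwc : ContinuousOn w (Icc t₀ b) :=
    (hGc.sub hghc).div hA₃c (fun t ht => ne_of_gt (hA₃p t ht))
  have hφd : ∀ t ∈ Ioo t₀ b, HasDerivAt φ
      ((-(α t) * fh t - fh t * gh t) - (-(α t) * x t - A₃ t * x t * u t)) t :=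
    fun t ht => (hfhd t ht).sub (hxd t ht)
  have hwdv : ∀ t ∈ Ioo t₀ b, HasDerivAt w
      ((((-(x t) ^ 2 / A₃ t * A₃ t + u t * A₃' t) - (A₃' t / A₃ t * gh t - fh t ^ 2)) * A₃ t
        - (G t - gh t) * A₃' t) / A₃ t ^ 2) t :=
    fun t ht => ((hGd t ht).sub (hghd t ht)).div (hA₃d t ht)
      (ne_of_gt (hA₃p t (Ioo_subset_Icc_self ht)))
  have hwd : ∀ t ∈ Ioo t₀ b, HasDerivAt w ((fh t + x t) * φ t / A₃ t) t := by
    intro t ht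
    have hA := ne_of_gt (hA₃p t (Ioo_subset_Icc_self ht))
    have h := hwdv t ht
    have heq : (((-(x t) ^ 2 / A₃ t * A₃ t + u t * A₃' t)
          - (A₃' t / A₃ t * gh t - fh t ^ 2)) * A₃ t
        - (G t - gh t) * A₃' t) / A₃ t ^ 2 = (fh t + x t) * φ t / A₃ t := by
      simp only [hGdef, hφdef]
      field_simp
      ring
    rwa [heq] at h
  -- the bound Λ
  have hαc : ContinuousOn α (Icc t₀ b) := hαcont.mono hIccIci
  have hΛcont : ContinuousOn (fun t => |K0 - α t - gh t|
      + |x t * Real.exp (K0 * t) * A₃ t|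
      + |(fh t + x t) * Real.exp (-(K0 * t)) / A₃ t|) (Icc t₀ b) := by
    apply ContinuousOn.add
    apply ContinuousOn.add
    · exact ((continuousOn_const.sub hαc).sub hghc).abs
    · exact ((hxc.mul ((Real.continuous_exp.comp
        (continuous_const.mul continuous_id)).continuousOn)).mul hA₃c).abs
    · exact (((hfhc.add hxc).mul ((Real.continuous_exp.comp
        ((continuous_const.mul continuous_id).neg)).continuousOn)).div hA₃c
        (fun t ht => ne_of_gt (hA₃p t ht))).abs
  obtain ⟨Λ, hΛ⟩ := isCompact_Icc.exists_bound_of_continuousOn hΛcont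
  -- ε-perturbation positivity
  have hεpos : ∀ ε, 0 < ε → ∀ t ∈ Icc t₀ b,
      0 < φ t * Real.exp (K0 * t) + ε * Real.exp (Λ * (t - t₀)) ∧
      0 < w t + ε * Real.exp (Λ * (t - t₀)) := by
    intro ε hε
    set E : ℝ → ℝ := fun t => Real.exp (Λ * (t - t₀)) with hEdef
    have hEd : ∀ t : ℝ, HasDerivAt E (E t * Λ) t := by
      intro t
      simpa using (((hasDerivAt_id t).sub_const t₀).const_mul Λ).exp
    have hEc : Continuous E := Real.continuous_exp.comp
      (continuous_const.mul (continuous_id.sub continuous_const))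
    have hexpc : Continuous (fun t : ℝ => Real.exp (K0 * t)) :=
      Real.continuous_exp.comp (continuous_const.mul continuous_id)
    apply pair_pos_on_Icc
      (y' := fun t => ((-(α t) * fh t - fh t * gh t)
        - (-(α t) * x t - A₃ t * x t * u t)) * Real.exp (K0 * t)
        + φ t * (Real.exp (K0 * t) * K0) + ε * (E t * Λ))
      (z' := fun t => (fh t + x t) * φ t / A₃ t + ε * (E t * Λ))
    · exact (hφc.mul hexpc.continuousOn).add (continuousOn_const.mul hEc.continuousOn)
    · exact hwc.add (continuousOn_const.mul hEc.continuousOn)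
    · intro t ht
      have he : HasDerivAt (fun t : ℝ => Real.exp (K0 * t)) (Real.exp (K0 * t) * K0) t := by
        simpa using (((hasDerivAt_id t).const_mul K0).exp)
      exact ((hφd t ht).mul he).add ((hEd t).const_mul ε)
    · intro t ht
      exact (hwd t ht).add ((hEd t).const_mul ε)
    · -- the cooperative inequality
      intro t ht hy hz
      have htI : t ∈ Icc t₀ b := Ioo_subset_Icc_self ht
      have hA := hA₃p t htI
      have hAne : A₃ t ≠ 0 := ne_of_gt hA
      have hxp := hxpos t htI
      have hfhp := hfhpos t htI.1
      have hαb := hαbdd t htI.1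
      have hghb := (hhbdd t htI.1).2
      have hΛt := hΛ t htI
      rw [Real.norm_eq_abs] at hΛt
      have hEp : 0 < E t := Real.exp_pos _
      have hXp : 0 < Real.exp (K0 * t) := Real.exp_pos _
      have hXne : Real.exp (K0 * t) ≠ 0 := hXp.ne'
      have hXne' : Real.exp (-(K0 * t)) = (Real.exp (K0 * t))⁻¹ := by
        rw [← Real.exp_neg]
      set a₁ := K0 - α t - gh t with ha₁
      set b₁ := x t * Real.exp (K0 * t) * A₃ t with hb₁
      set c₂ := (fh t + x t) * Real.exp (-(K0 * t)) / A₃ t with hc₂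
      have ha₁nn : 0 ≤ a₁ := by
        rw [ha₁, hK0def]
        linarith [(abs_le.mp hαb).2, (abs_le.mp hghb).2]
      have hb₁nn : 0 ≤ b₁ := by
        rw [hb₁]; exact (mul_nonneg (mul_nonneg hxp.le hXp.le) hA.le)
      have hc₂nn : 0 ≤ c₂ := by
        rw [hc₂]
        apply div_nonneg _ hA.le
        exact mul_nonneg (by linarith) (Real.exp_pos _).le
      have habs : a₁ ≤ |a₁| := le_abs_self _
      have hbabs : b₁ ≤ |b₁| := le_abs_self _
      have hcabs : c₂ ≤ |c₂| := le_abs_self _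
      have hΛt' : |a₁| + |b₁| + |c₂| ≤ Λ := le_trans (le_abs_self _) hΛt
      have hΛ1 : a₁ + b₁ ≤ Λ := by
        have h0 : 0 ≤ |c₂| := abs_nonneg _
        linarith
      have hΛ2 : c₂ ≤ Λ := by
        linarith [abs_nonneg a₁, abs_nonneg b₁]
      constructor
      · have key : ((-(α t) * fh t - fh t * gh t)
            - (-(α t) * x t - A₃ t * x t * u t)) * Real.exp (K0 * t)
            + φ t * (Real.exp (K0 * t) * K0) + ε * (E t * Λ)
            = a₁ * (φ t * Real.exp (K0 * t) + ε * E t)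
              + b₁ * (w t + ε * E t) + ε * E t * (Λ - a₁ - b₁) := by
          simp only [ha₁, hb₁, hφdef, hwdef, hGdef, hK0def]
          field_simp
          ring
        rw [key]
        have h1 : 0 ≤ a₁ * (φ t * Real.exp (K0 * t) + ε * E t) := mul_nonneg ha₁nn hy
        have h2 : 0 ≤ b₁ * (w t + ε * E t) := mul_nonneg hb₁nn hz
        have h3 : 0 ≤ ε * E t * (Λ - a₁ - b₁) :=
          mul_nonneg (mul_nonneg hε.le hEp.le) (by linarith)
        linarith
      · have key : (fh t + x t) * φ t / A₃ t + ε * (E t * Λ)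
            = c₂ * (φ t * Real.exp (K0 * t) + ε * E t) + ε * E t * (Λ - c₂) := by
          simp only [hc₂, hφdef, hXne']
          field_simp
          ring
        rw [key]
        have h1 : 0 ≤ c₂ * (φ t * Real.exp (K0 * t) + ε * E t) := mul_nonneg hc₂nn hy
        have h2 : 0 ≤ ε * E t * (Λ - c₂) :=
          mul_nonneg (mul_nonneg hε.le hEp.le) (by linarith)
        linarith
    · -- initial value y
      have hφ0 : 0 ≤ φ t₀ := by
        simp only [hφdef]; rw [hx0]; linarith
      have h1 : 0 ≤ φ t₀ * Real.exp (K0 * t₀) := mul_nonneg hφ0 (Real.exp_pos _).le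
      have h2 : Real.exp (Λ * (t₀ - t₀)) = 1 := by simp
      simp only [hEdef, h2]
      linarith
    · -- initial value z
      have hw0 : 0 ≤ w t₀ := by
        simp only [hwdef, hGdef]
        rw [hu0]
        apply div_nonneg _ (hA₃p t₀ (left_mem_Icc.mpr hb)).le
        linarith
      have h2 : Real.exp (Λ * (t₀ - t₀)) = 1 := by simp
      simp only [hEdef, h2]
      linarith
  -- pass to the limit ε → 0
  have hφw : ∀ t ∈ Icc t₀ b, 0 ≤ φ t ∧ 0 ≤ w t := by
    intro t ht
    have hEp : 0 < Real.exp (Λ * (t - t₀)) := Real.exp_pos _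
    have hXp : 0 < Real.exp (K0 * t) := Real.exp_pos _
    constructor
    · by_contra hneg
      push_neg at hneg
      set ε := -(φ t * Real.exp (K0 * t)) / (2 * Real.exp (Λ * (t - t₀))) with hεd
      have hεp : 0 < ε := by
        apply div_pos _ (by linarith)
        nlinarith
      have hcon := (hεpos ε hεp t ht).1
      have hcalc : φ t * Real.exp (K0 * t) + ε * Real.exp (Λ * (t - t₀))
          = φ t * Real.exp (K0 * t) / 2 := by
        rw [hεd]; field_simp; ring
      rw [hcalc] at hcon
      nlinarith
    · by_contra hneg
      push_neg at hneg
      set ε := -(w t) / (2 * Real.exp (Λ * (t - t₀))) with hεd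
      have hεp : 0 < ε := by
        apply div_pos _ (by linarith)
        linarith
      have hcon := (hεpos ε hεp t ht).2
      have hcalc : w t + ε * Real.exp (Λ * (t - t₀)) = w t / 2 := by
        rw [hεd]; field_simp; ring
      rw [hcalc] at hcon
      linarith
  -- conclude
  intro t ht
  refine ⟨⟨hxpos t ht, ?_⟩, ?_, huled t ht⟩
  · have := (hφw t ht).1
    simp only [hφdef] at this
    linarith
  · have hw := (hφw t ht).2
    have hA := hA₃p t ht
    have h1 : 0 ≤ (G t - gh t) / A₃ t * A₃ t := mul_nonneg hw hA.le
    rw [div_mul_cancel₀ _ (ne_of_gt hA)] at h1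
    simp only [hGdef] at h1
    linarith

end Invariance

section Existence

/-- Lipschitz property of the transformed vector field on balls. -/
lemma field_lip (a₀ ℓ Mα R : ℝ) (αm Am : ℝ → ℝ)
    (ha₀ : 0 < a₀) (hAm : ∀ t, a₀ ≤ Am t ∧ Am t ≤ ℓ) (hαm : ∀ t, |αm t| ≤ Mα)
    (hR : 0 ≤ R) (t : ℝ) :
    LipschitzOnWith (Real.toNNReal (Mα + 2 * ℓ * R + 2 * R / a₀))
      (fun p : ℝ × ℝ => (-(αm t) * p.1 - Am t * p.1 * p.2, -(p.1) ^ 2 / Am t))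
      (closedBall (0 : ℝ × ℝ) R) := by
  have hMα0 : 0 ≤ Mα := le_trans (abs_nonneg _) (hαm t)
  have hA1 : a₀ ≤ Am t := (hAm t).1
  have hA2 : Am t ≤ ℓ := (hAm t).2
  have hAp : 0 < Am t := lt_of_lt_of_le ha₀ hA1
  have hℓ0 : 0 ≤ ℓ := le_trans hAp.le hA2
  have hL0 : 0 ≤ Mα + 2 * ℓ * R + 2 * R / a₀ := by positivity
  rw [lipschitzOnWith_iff_dist_le_mul]
  intro p hp q hq
  rw [Real.coe_toNNReal _ hL0]
  set d := dist p q with hd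
  have hd0 : 0 ≤ d := dist_nonneg
  have hd1 : |p.1 - q.1| ≤ d := by
    rw [hd, Prod.dist_eq]
    exact le_trans (le_of_eq (Real.dist_eq _ _).symm) (le_max_left _ _)
  have hd2 : |p.2 - q.2| ≤ d := by
    rw [hd, Prod.dist_eq]
    exact le_trans (le_of_eq (Real.dist_eq _ _).symm) (le_max_right _ _)
  have hnp : ∀ r : ℝ × ℝ, r ∈ closedBall (0 : ℝ × ℝ) R → |r.1| ≤ R ∧ |r.2| ≤ R := by
    intro r hr
    rw [mem_closedBall_zero_iff, Prod.norm_def] at hr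
    constructor
    · exact le_trans (le_max_left _ _) hr
    · exact le_trans (le_max_right _ _) hr
  obtain ⟨hp1, hp2⟩ := hnp p hp
  obtain ⟨hq1, hq2⟩ := hnp q hq
  rw [Prod.dist_eq]
  apply max_le
  · rw [Real.dist_eq]
    have e1 : (-(αm t) * p.1 - Am t * p.1 * p.2) - (-(αm t) * q.1 - Am t * q.1 * q.2)
        = (-(αm t)) * (p.1 - q.1) + (-(Am t * p.1)) * (p.2 - q.2)
          + (-(Am t * q.2)) * (p.1 - q.1) := by ring
    rw [e1]
    have h3 := abs_add_three ((-(αm t)) * (p.1 - q.1)) ((-(Am t * p.1)) * (p.2 - q.2))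
      ((-(Am t * q.2)) * (p.1 - q.1))
    apply le_trans h3
    rw [abs_mul, abs_mul, abs_mul, abs_neg, abs_neg, abs_neg, abs_mul, abs_mul,
      abs_of_pos hAp]
    have tA : |αm t| * |p.1 - q.1| ≤ Mα * d :=
      mul_le_mul (hαm t) hd1 (abs_nonneg _) hMα0
    have tB : Am t * |p.1| * |p.2 - q.2| ≤ ℓ * R * d :=
      mul_le_mul (mul_le_mul hA2 hp1 (abs_nonneg _) hℓ0) hd2 (abs_nonneg _)
        (mul_nonneg hℓ0 hR)
    have tC : Am t * |q.2| * |p.1 - q.1| ≤ ℓ * R * d :=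
      mul_le_mul (mul_le_mul hA2 hq2 (abs_nonneg _) hℓ0) hd1 (abs_nonneg _)
        (mul_nonneg hℓ0 hR)
    have : 0 ≤ 2 * R / a₀ * d := by positivity
    nlinarith
  · rw [Real.dist_eq]
    have e2 : -(p.1) ^ 2 / Am t - (-(q.1) ^ 2 / Am t) = ((q.1 + p.1) * (q.1 - p.1)) / Am t := by
      field_simp
      ring
    rw [e2, abs_div, abs_of_pos hAp, abs_mul]
    have h1 : |q.1 + p.1| ≤ 2 * R := by
      have := abs_add_le q.1 p.1
      linarith
    have h2 : |q.1 - p.1| ≤ d := by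
      rw [abs_sub_comm]; exact hd1
    have h3 : |q.1 + p.1| * |q.1 - p.1| ≤ 2 * R * d :=
      mul_le_mul h1 h2 (abs_nonneg _) (by linarith)
    have h4 : |q.1 + p.1| * |q.1 - p.1| / Am t ≤ 2 * R * d / a₀ :=
      div_le_div₀ (by positivity) h3 ha₀ hA1
    have h5 : 2 * R * d / a₀ = 2 * R / a₀ * d := by ring
    have h6 : 0 ≤ (Mα + 2 * ℓ * R) * d := by positivity
    nlinarith [h4]

/-- Global existence given an a priori bound. -/
lemma global_exists (t₀ a₀ ℓ Mα M₀ : ℝ) (αm Am : ℝ → ℝ) (x₀ : ℝ × ℝ)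
    (ha₀ : 0 < a₀) (hAm : ∀ t, a₀ ≤ Am t ∧ Am t ≤ ℓ) (hαm : ∀ t, |αm t| ≤ Mα)
    (hαmc : Continuous αm) (hAmc : Continuous Am) (hM₀ : 0 ≤ M₀)
    (v : ℝ → ℝ × ℝ → ℝ × ℝ)
    (hv : v = fun t p => (-(αm t) * p.1 - Am t * p.1 * p.2, -(p.1) ^ 2 / Am t))
    (hbound : ∀ b, t₀ ≤ b → ∀ p : ℝ → ℝ × ℝ, p t₀ = x₀ →
      (∀ t ∈ Icc t₀ b, HasDerivWithinAt p (v t (p t)) (Icc t₀ b) t) →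
      ∀ t ∈ Icc t₀ b, ‖p t‖ ≤ M₀) :
    ∀ b, t₀ ≤ b → ∃ p : ℝ → ℝ × ℝ, p t₀ = x₀ ∧
      ∀ t ∈ Icc t₀ b, HasDerivWithinAt p (v t (p t)) (Icc t₀ b) t := by
  have hMα0 : 0 ≤ Mα := le_trans (abs_nonneg _) (hαm t₀)
  have hℓ0 : 0 ≤ ℓ := le_trans (lt_of_lt_of_le ha₀ (hAm t₀).1).le (hAm t₀).2
  set M₁ : ℝ := M₀ + 1 with hM₁
  have hM₁0 : 0 < M₁ := by rw [hM₁]; linarith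
  set C : ℝ := max (Mα * M₁ + ℓ * M₁ ^ 2) (M₁ ^ 2 / a₀) + 1 with hC
  have hC1 : 1 ≤ C := by
    rw [hC]
    have : (0:ℝ) ≤ M₁ ^ 2 / a₀ := by positivity
    have := le_max_right (Mα * M₁ + ℓ * M₁ ^ 2) (M₁ ^ 2 / a₀)
    linarith
  have hCp : 0 < C := by linarith
  set δ : ℝ := 1 / C with hδdef
  have hδ : 0 < δ := by rw [hδdef]; positivity
  set L : NNReal := Real.toNNReal (Mα + 2 * ℓ * M₁ + 2 * M₁ / a₀) with hL
  -- norm bound for the field on the M₁-ball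
  have hnorm : ∀ t : ℝ, ∀ x : ℝ × ℝ, ‖x‖ ≤ M₁ → ‖v t x‖ ≤ C := by
    intro t x hx
    have hx1 : |x.1| ≤ M₁ := le_trans (norm_fst_le x) hx
    have hx2 : |x.2| ≤ M₁ := le_trans (norm_snd_le x) hx
    have hA1 : a₀ ≤ Am t := (hAm t).1
    have hA2 : Am t ≤ ℓ := (hAm t).2
    have hAp : 0 < Am t := lt_of_lt_of_le ha₀ hA1
    rw [hv, Prod.norm_def]
    apply max_le
    · simp only [Real.norm_eq_abs]
      have e1 : -(αm t) * x.1 - Am t * x.1 * x.2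
          = (-(αm t)) * x.1 + (-(Am t * x.1)) * x.2 := by ring
      rw [e1]
      apply le_trans (abs_add_le _ _)
      rw [abs_mul, abs_mul, abs_neg, abs_neg, abs_mul, abs_of_pos hAp]
      have tA : |αm t| * |x.1| ≤ Mα * M₁ :=
        mul_le_mul (hαm t) hx1 (abs_nonneg _) hMα0
      have tB : Am t * |x.1| * |x.2| ≤ ℓ * M₁ ^ 2 := by
        have : Am t * |x.1| ≤ ℓ * M₁ := mul_le_mul hA2 hx1 (abs_nonneg _) hℓ0
        have h2 : Am t * |x.1| * |x.2| ≤ ℓ * M₁ * M₁ :=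
          mul_le_mul this hx2 (abs_nonneg _) (by positivity)
        nlinarith
      have hmax := le_max_left (Mα * M₁ + ℓ * M₁ ^ 2) (M₁ ^ 2 / a₀)
      calc |αm t| * |x.1| + Am t * |x.1| * |x.2| ≤ Mα * M₁ + ℓ * M₁ ^ 2 :=
            add_le_add tA tB
        _ ≤ max (Mα * M₁ + ℓ * M₁ ^ 2) (M₁ ^ 2 / a₀) := hmax
        _ ≤ C := by rw [hC]; linarith
    · simp only [Real.norm_eq_abs]
      have e2 : |(-(x.1) ^ 2 / Am t)| = x.1 ^ 2 / Am t := by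
        rw [abs_div, abs_of_pos hAp, abs_neg, abs_pow, sq_abs]
      rw [e2]
      have h3 : x.1 ^ 2 ≤ M₁ ^ 2 := by nlinarith [abs_nonneg x.1, sq_abs x.1]
      have h4 : x.1 ^ 2 / Am t ≤ M₁ ^ 2 / a₀ := div_le_div₀ (by positivity) h3 ha₀ hA1
      have hmax := le_max_right (Mα * M₁ + ℓ * M₁ ^ 2) (M₁ ^ 2 / a₀)
      calc x.1 ^ 2 / Am t ≤ M₁ ^ 2 / a₀ := h4
        _ ≤ max (Mα * M₁ + ℓ * M₁ ^ 2) (M₁ ^ 2 / a₀) := hmax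
        _ ≤ C := by rw [hC]; linarith
  -- the induction
  have key : ∀ n : ℕ, ∃ p : ℝ → ℝ × ℝ, p t₀ = x₀ ∧
      ∀ t ∈ Icc t₀ (t₀ + n * δ), HasDerivWithinAt p (v t (p t)) (Icc t₀ (t₀ + n * δ)) t := by
    intro n
    induction n with
    | zero =>
      refine ⟨fun _ => x₀, rfl, ?_⟩
      intro t ht
      simp only [Nat.cast_zero, zero_mul, add_zero, Icc_self, mem_singleton_iff] at ht ⊢
      subst ht
      exact hasDerivWithinAt_singleton' _ _ _
    | succ n ih =>
      obtain ⟨p, hp0, hpd⟩ := ih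
      set c : ℝ := t₀ + n * δ with hcdef
      have hc : t₀ ≤ c := by
        rw [hcdef]
        have : (0:ℝ) ≤ n * δ := by positivity
        linarith
      have hx₁ : ‖p c‖ ≤ M₀ := hbound c hc p hp0 hpd c ⟨hc, le_rfl⟩
      have hpl : IsPicardLindelof v (tmin := c) (tmax := c + δ) ⟨c, le_rfl, by linarith⟩
          (p c) 1 0 ⟨C, hCp.le⟩ L :=
        { lipschitzOnWith := by
            intro t _
            have hlip := field_lip a₀ ℓ Mα M₁ αm Am ha₀ hAm hαm (by positivity) t
            rw [hv]
            apply hlip.mono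
            apply closedBall_subset_closedBall'
            have : dist (p c) (0 : ℝ × ℝ) = ‖p c‖ := dist_zero_right _
            rw [this, hM₁]
            have h1 : ((1 : NNReal) : ℝ) = 1 := NNReal.coe_one
            linarith
          continuousOn := by
            intro x _
            rw [hv]
            apply ContinuousOn.prodMk
            · exact ((hαmc.neg.mul continuous_const).sub
                ((hAmc.mul continuous_const).mul continuous_const)).continuousOn
            · exact (continuous_const.div hAmc
                (fun t => ne_of_gt (lt_of_lt_of_le ha₀ (hAm t).1))).continuousOn
          norm_le := by
            intro t _ x hx
            apply hnorm t x
            have h1 : ‖x - p c‖ ≤ 1 := mem_closedBall_iff_norm.mp hx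
            have h2 : ‖x‖ ≤ ‖x - p c‖ + ‖p c‖ := by
              have := norm_add_le (x - p c) (p c)
              simpa using this
            rw [hM₁]
            linarith
          mul_max_le := by
            have h1 : c + δ - c = δ := by ring
            have h2 : c - c = 0 := by ring
            show C * max (c + δ - c) (c - c) ≤ ((1 : NNReal) : ℝ) - ((0 : NNReal) : ℝ)
            rw [h1, h2, max_eq_left hδ.le, hδdef]
            rw [mul_one_div, div_self hCp.ne']
            simp
        }
      obtain ⟨q, hq0', hqd⟩ := hpl.exists_eq_forall_mem_Icc_hasDerivWithinAt₀
      have hq0 : q c = p c := hq0'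
      set r : ℝ → ℝ × ℝ := fun t => if t ≤ c then p t else q t with hrdef
      have hp' : ∀ t ∈ Icc t₀ c, HasDerivWithinAt p (v t (r t)) (Icc t₀ c) t := by
        intro t ht
        have : r t = p t := by rw [hrdef]; simp [ht.2]
        rw [this]
        exact hpd t ht
      have hq' : ∀ t ∈ Icc c (c + δ), HasDerivWithinAt q (v t (r t)) (Icc c (c + δ)) t := by
        intro t ht
        have : r t = q t := by
          rw [hrdef]
          rcases lt_or_eq_of_le ht.1 with h | h
          · simp [not_le.mpr h]
          · simp [← h, hq0]
        rw [this]
        exact hqd t ht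
      have hglue := glue_sol hc (by linarith : c ≤ c + δ) hp' hq' (by rw [hq0])
      have hend : t₀ + (n + 1 : ℕ) * δ = c + δ := by
        rw [hcdef]
        push_cast
        ring
      refine ⟨r, ?_, ?_⟩
      · rw [hrdef]; simp [hc, hp0]
      · rw [hend]
        exact hglue
  -- conclude for arbitrary b
  intro b hb
  obtain ⟨n, hn⟩ := exists_nat_ge ((b - t₀) / δ)
  have hble : b ≤ t₀ + n * δ := by
    rw [div_le_iff₀ hδ] at hn
    linarith
  obtain ⟨p, hp0, hpd⟩ := key n
  exact ⟨p, hp0, fun t ht => (hpd t ⟨ht.1, le_trans ht.2 hble⟩).mono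
    (Icc_subset_Icc_right hble)⟩

/-- passing from within-Icc derivatives to within-Ici derivatives -/
lemma deriv_Icc_to_Ici {E : Type*} [NormedAddCommGroup E] [NormedSpace ℝ E]
    {p : ℝ → E} {d : E} {t₀ b t : ℝ} (h : HasDerivWithinAt p d (Icc t₀ b) t)
    (ht : t ∈ Ico t₀ b) : HasDerivWithinAt p d (Ici t) t := by
  apply h.mono_of_mem_nhdsWithin
  rw [mem_nhdsWithin]
  exact ⟨Iio b, isOpen_Iio, ht.2, fun s hs => ⟨le_trans ht.1 hs.2, hs.1.le⟩⟩

end Existence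


/-- Let `A₃ : [t₀, ∞) → (0, ∞)` be differentiable and nondecreasing with
limit `ℓ ∈ (0, ∞)`, and `α` continuous and bounded. Consider the system
`f' = −α f − f g`, `g' = (A₃'/A₃) g − f²`. If `(f̂, ĝ)` is a bounded solution on
`[t₀, ∞)` with `ĝ → Ĝ_∞`, and `(f, g)` is a solution on `[t₀, T)` with distinct data
satisfying `g(t₀) ≥ ĝ(t₀)`, `f̂(t₀) ≥ f(t₀) > 0`, then `(f, g)` extends to a bounded
solution on all of `[t₀, ∞)`, `g` converges to a limit `G_∞`, and `G_∞ > Ĝ_∞`. -/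
theorem comparison_completeness (t₀ ℓ Ghinf : ℝ) (hℓ : 0 < ℓ)
    (T : EReal) (hT : (t₀ : EReal) < T)
    (A₃ A₃' α f g fh gh : ℝ → ℝ)
    (hA₃pos : ∀ t ∈ Set.Ici t₀, 0 < A₃ t)
    (hA₃deriv : ∀ t ∈ Set.Ici t₀, HasDerivWithinAt A₃ (A₃' t) (Set.Ici t₀) t)
    (hA₃mono : MonotoneOn A₃ (Set.Ici t₀))
    (hA₃lim : Tendsto A₃ atTop (nhds ℓ))
    (hαcont : ContinuousOn α (Set.Ici t₀))
    (hαbdd : ∃ M : ℝ, ∀ t ∈ Set.Ici t₀, |α t| ≤ M)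
    -- (f̂, ĝ) is a bounded solution on [t₀, ∞) with ĝ → Ĝ_∞
    (hfh : ∀ t ∈ Set.Ici t₀,
      HasDerivWithinAt fh (-(α t) * fh t - fh t * gh t) (Set.Ici t₀) t)
    (hgh : ∀ t ∈ Set.Ici t₀,
      HasDerivWithinAt gh (A₃' t / A₃ t * gh t - (fh t) ^ 2) (Set.Ici t₀) t)
    (hhbdd : ∃ M : ℝ, ∀ t ∈ Set.Ici t₀, |fh t| ≤ M ∧ |gh t| ≤ M)
    (hghlim : Tendsto gh atTop (nhds Ghinf))
    -- (f, g) is a solution on [t₀, T)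
    (hf : ∀ t, t₀ ≤ t → (t : EReal) < T →
      HasDerivWithinAt f (-(α t) * f t - f t * g t) {t : ℝ | t₀ ≤ t ∧ (t : EReal) < T} t)
    (hg : ∀ t, t₀ ≤ t → (t : EReal) < T →
      HasDerivWithinAt g (A₃' t / A₃ t * g t - (f t) ^ 2)
        {t : ℝ | t₀ ≤ t ∧ (t : EReal) < T} t)
    (hne : (f t₀, g t₀) ≠ (fh t₀, gh t₀))
    (hg0 : g t₀ ≥ gh t₀) (hf0 : fh t₀ ≥ f t₀) (hfpos : f t₀ > 0) :
    ∃ F G : ℝ → ℝ,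
      (∀ t, t₀ ≤ t → (t : EReal) < T → F t = f t ∧ G t = g t) ∧
      (∀ t ∈ Set.Ici t₀,
        HasDerivWithinAt F (-(α t) * F t - F t * G t) (Set.Ici t₀) t ∧
        HasDerivWithinAt G (A₃' t / A₃ t * G t - (F t) ^ 2) (Set.Ici t₀) t) ∧
      (∃ M : ℝ, ∀ t ∈ Set.Ici t₀, |F t| ≤ M ∧ |G t| ≤ M) ∧
      ∃ Ginf : ℝ, Tendsto G atTop (nhds Ginf) ∧ Ginf > Ghinf := by
  classical
  obtain ⟨Mα, hMα⟩ := hαbdd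
  obtain ⟨Mh, hMh⟩ := hhbdd
  have ht₀Ici : t₀ ∈ Set.Ici t₀ := Set.self_mem_Ici
  have hMα0 : 0 ≤ Mα := le_trans (abs_nonneg _) (hMα t₀ ht₀Ici)
  have hMh0 : 0 ≤ Mh := le_trans (abs_nonneg _) (hMh t₀ ht₀Ici).1
  set a₀ : ℝ := A₃ t₀ with ha₀def
  have ha₀ : 0 < a₀ := hA₃pos t₀ ht₀Ici
  have hAcont : ContinuousOn A₃ (Set.Ici t₀) :=
    fun t ht => (hA₃deriv t ht).continuousWithinAt
  have hAle : ∀ t ∈ Set.Ici t₀, A₃ t ≤ ℓ := by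
    intro t ht
    apply ge_of_tendsto hA₃lim
    filter_upwards [eventually_ge_atTop t] with s hs
    exact hA₃mono ht (le_trans ht hs) hs
  have ha₀le : ∀ t ∈ Set.Ici t₀, a₀ ≤ A₃ t := fun t ht => hA₃mono ht₀Ici ht ht
  -- fh is positive
  have hfhpos : ∀ t ∈ Set.Ici t₀, 0 < fh t := by
    intro t ht
    have hIccIci : Set.Icc t₀ t ⊆ Set.Ici t₀ := fun r hr => hr.1
    have := pos_on_Icc (a := t₀) (b := t) (c := fun s => -(α s + gh s)) (K := Mα + Mh)
      (fun s hs => ((hfh s (hIccIci hs)).continuousWithinAt).mono hIccIci)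
      (fun s hs => by
        have h := (hfh s (le_of_lt hs.1)).hasDerivAt (Ici_mem_nhds hs.1)
        have heq : -(α s) * fh s - fh s * gh s = -(α s + gh s) * fh s := by ring
        rwa [heq] at h)
      (fun s hs => by
        have h1 := hMα s (hIccIci hs)
        have h2 := (hMh s (hIccIci hs)).2
        calc |(-(α s + gh s))| = |α s + gh s| := abs_neg _
          _ ≤ |α s| + |gh s| := abs_add_le _ _
          _ ≤ Mα + Mh := add_le_add h1 h2)
      (by linarith)
    exact this t ⟨ht, le_rfl⟩
  -- the modified (globally defined) coefficients and the transformed field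
  have hAmb : ∀ t : ℝ, a₀ ≤ A₃ (max t t₀) ∧ A₃ (max t t₀) ≤ ℓ := fun t =>
    ⟨ha₀le _ (Set.mem_Ici.mpr (le_max_right _ _)),
     hAle _ (Set.mem_Ici.mpr (le_max_right _ _))⟩
  have hαmb : ∀ t : ℝ, |α (max t t₀)| ≤ Mα := fun t =>
    hMα _ (Set.mem_Ici.mpr (le_max_right _ _))
  have hmaxc : Continuous (fun t : ℝ => max t t₀) := continuous_id.max continuous_const
  have hAmc : Continuous (fun t : ℝ => A₃ (max t t₀)) :=
    hAcont.comp_continuous hmaxc (fun t => Set.mem_Ici.mpr (le_max_right _ _))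
  have hαmc : Continuous (fun t : ℝ => α (max t t₀)) :=
    hαcont.comp_continuous hmaxc (fun t => Set.mem_Ici.mpr (le_max_right _ _))
  set v : ℝ → ℝ × ℝ → ℝ × ℝ := fun t p =>
    (-(α (max t t₀)) * p.1 - A₃ (max t t₀) * p.1 * p.2, -(p.1) ^ 2 / A₃ (max t t₀))
    with hvdef
  set x₀ : ℝ × ℝ := (f t₀, g t₀ / A₃ t₀) with hx₀def
  -- the invariance wrapper
  have hinv : ∀ b, t₀ ≤ b → ∀ p : ℝ → ℝ × ℝ, p t₀ = x₀ →
      (∀ t ∈ Set.Icc t₀ b, HasDerivWithinAt p (v t (p t)) (Set.Icc t₀ b) t) →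
      ∀ t ∈ Set.Icc t₀ b, (0 < (p t).1 ∧ (p t).1 ≤ fh t) ∧
        gh t ≤ (p t).2 * A₃ t ∧ (p t).2 ≤ g t₀ / A₃ t₀ := by
    intro b hb p hp0 hpd
    apply invariance t₀ b Mα Mh A₃ A₃' α fh gh hA₃pos hA₃deriv hMα hαcont hfh hgh hMh
      hfhpos (f t₀) (g t₀ / A₃ t₀) hfpos hf0 ?_ p hp0 ?_
    · rw [div_mul_cancel₀ _ (ne_of_gt ha₀)]
      exact hg0
    · intro t ht
      have h := hpd t ht
      rw [hvdef] at h
      simp only [max_eq_left ht.1] at h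
      exact h
  -- the a priori bound
  set M₀ : ℝ := max Mh (max (|g t₀ / A₃ t₀|) (Mh / a₀)) with hM₀def
  have hM₀0 : 0 ≤ M₀ := le_trans hMh0 (le_max_left _ _)
  have hM₀1 : Mh ≤ M₀ := le_max_left _ _
  have hM₀2 : |g t₀ / A₃ t₀| ≤ M₀ := le_trans (le_max_left _ _) (le_max_right _ _)
  have hM₀3 : Mh / a₀ ≤ M₀ := le_trans (le_max_right _ _) (le_max_right _ _)
  have hbound : ∀ b, t₀ ≤ b → ∀ p : ℝ → ℝ × ℝ, p t₀ = x₀ →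
      (∀ t ∈ Set.Icc t₀ b, HasDerivWithinAt p (v t (p t)) (Set.Icc t₀ b) t) →
      ∀ t ∈ Set.Icc t₀ b, ‖p t‖ ≤ M₀ := by
    intro b hb p hp0 hpd t ht
    obtain ⟨⟨hx1, hx2⟩, hg1, hg2⟩ := hinv b hb p hp0 hpd t ht
    rw [Prod.norm_def]
    apply max_le
    · rw [Real.norm_eq_abs, abs_of_pos hx1]
      exact le_trans hx2 (le_trans (le_trans (le_abs_self _) (hMh t ht.1).1) hM₀1)
    · rw [Real.norm_eq_abs, abs_le]
      constructor
      · rcases le_or_gt 0 ((p t).2) with h | h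
        · linarith
        · have hA1 : a₀ ≤ A₃ t := ha₀le t ht.1
          have h2 : (p t).2 * A₃ t ≤ (p t).2 * a₀ := by nlinarith
          have h3 : -Mh ≤ gh t := by linarith [neg_abs_le (gh t), (hMh t ht.1).2]
          have h4 : -Mh ≤ (p t).2 * a₀ := by linarith
          have h5 : -(Mh / a₀) ≤ (p t).2 := by
            rw [neg_div']
            exact (div_le_iff₀ ha₀).mpr (by linarith)
          linarith
      · exact le_trans hg2 (le_trans (le_abs_self _) hM₀2)
  -- global existence of the transformed solution
  have hSol := global_exists t₀ a₀ ℓ Mα M₀ (fun t => α (max t t₀)) (fun t => A₃ (max t t₀))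
    x₀ ha₀ hAmb hαmb hαmc hAmc hM₀0 v hvdef hbound
  set Psol : ℝ → ℝ → ℝ × ℝ := fun b =>
    if hb : t₀ ≤ b then Classical.choose (hSol b hb) else fun _ => x₀ with hPsoldef
  have hPsol0 : ∀ b, t₀ ≤ b → Psol b t₀ = x₀ := by
    intro b hb
    rw [hPsoldef]
    simp only [dif_pos hb]
    exact (Classical.choose_spec (hSol b hb)).1
  have hPsold : ∀ b (hb : t₀ ≤ b), ∀ t ∈ Set.Icc t₀ b,
      HasDerivWithinAt (Psol b) (v t (Psol b t)) (Set.Icc t₀ b) t := by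
    intro b hb
    rw [hPsoldef]
    simp only [dif_pos hb]
    exact (Classical.choose_spec (hSol b hb)).2
  -- uniqueness
  have huniq : ∀ b R, 0 ≤ R → ∀ p q : ℝ → ℝ × ℝ,
      ContinuousOn p (Set.Icc t₀ b) → ContinuousOn q (Set.Icc t₀ b) →
      (∀ t ∈ Set.Ico t₀ b, HasDerivWithinAt p (v t (p t)) (Set.Ici t) t) →
      (∀ t ∈ Set.Ico t₀ b, HasDerivWithinAt q (v t (q t)) (Set.Ici t) t) →
      (∀ t ∈ Set.Ico t₀ b, ‖p t‖ ≤ R) → (∀ t ∈ Set.Ico t₀ b, ‖q t‖ ≤ R) →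
      p t₀ = q t₀ → ∀ t ∈ Set.Icc t₀ b, p t = q t := by
    intro b R hR p q hpc hqc hpd hqd hpb hqb h0
    have hlip : ∀ t : ℝ, LipschitzOnWith (Real.toNNReal (Mα + 2 * ℓ * R + 2 * R / a₀))
        (v t) (Metric.closedBall (0 : ℝ × ℝ) R) := by
      intro t
      rw [hvdef]
      exact field_lip a₀ ℓ Mα R (fun s => α (max s t₀)) (fun s => A₃ (max s t₀))
        ha₀ hAmb hαmb hR t
    exact fun t ht => ODE_solution_unique_of_mem_Icc_right (fun t _ => hlip t)
      hpc hpd (fun s hs => mem_closedBall_zero_iff.mpr (hpb s hs))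
      hqc hqd (fun s hs => mem_closedBall_zero_iff.mpr (hqb s hs)) h0 ht
  have hIciIci : ∀ b, Set.Icc t₀ b ⊆ Set.Ici t₀ := fun b t ht => ht.1
  -- coherence of the chosen solutions
  have hco : ∀ b₁ b₂, t₀ ≤ b₁ → b₁ ≤ b₂ → ∀ t ∈ Set.Icc t₀ b₁, Psol b₁ t = Psol b₂ t := by
    intro b₁ b₂ hb₁ hb₁₂
    have hb₂ : t₀ ≤ b₂ := le_trans hb₁ hb₁₂
    apply huniq b₁ M₀ hM₀0
    · exact fun t ht => (hPsold b₁ hb₁ t ht).continuousWithinAt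
    · exact fun t ht => ((hPsold b₂ hb₂ t (Set.Icc_subset_Icc_right hb₁₂ ht)).continuousWithinAt).mono
        (Set.Icc_subset_Icc_right hb₁₂)
    · exact fun t ht => deriv_Icc_to_Ici (hPsold b₁ hb₁ t (Set.Ico_subset_Icc_self ht)) ht
    · exact fun t ht => deriv_Icc_to_Ici
        (hPsold b₂ hb₂ t ⟨ht.1, le_trans ht.2.le hb₁₂⟩) ⟨ht.1, lt_of_lt_of_le ht.2 hb₁₂⟩
    · exact fun t ht => hbound b₁ hb₁ (Psol b₁) (hPsol0 b₁ hb₁) (hPsold b₁ hb₁) t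
        (Set.Ico_subset_Icc_self ht)
    · exact fun t ht => hbound b₂ hb₂ (Psol b₂) (hPsol0 b₂ hb₂) (hPsold b₂ hb₂) t
        ⟨ht.1, le_trans ht.2.le hb₁₂⟩
    · rw [hPsol0 b₁ hb₁, hPsol0 b₂ hb₂]
  -- the global solution
  set P : ℝ → ℝ × ℝ := fun t => Psol (max t t₀ + 1) t with hPdef
  have hPeq : ∀ b, t₀ ≤ b → ∀ t ∈ Set.Icc t₀ b, P t = Psol b t := by
    intro b hb t ht
    have h1 : max t t₀ = t := max_eq_left ht.1
    have ht1 : t₀ ≤ t + 1 := by linarith [ht.1]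
    rw [hPdef]
    simp only [h1]
    rcases le_total b (t + 1) with h | h
    · exact (hco b (t + 1) hb h t ht).symm
    · exact hco (t + 1) b ht1 h t ⟨ht.1, by linarith⟩
  have hP0 : P t₀ = x₀ := by
    rw [hPeq t₀ le_rfl t₀ (Set.left_mem_Icc.mpr le_rfl), hPsol0 t₀ le_rfl]
  have hPd : ∀ t ∈ Set.Ici t₀, HasDerivWithinAt P (v t (P t)) (Set.Ici t₀) t := by
    intro t ht
    have hb : t₀ ≤ t + 1 := by linarith [Set.mem_Ici.mp ht]
    have htIcc : t ∈ Set.Icc t₀ (t + 1) := ⟨ht, by linarith⟩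
    have h := hPsold (t + 1) hb t htIcc
    have h2 : HasDerivWithinAt P (v t (Psol (t + 1) t)) (Set.Icc t₀ (t + 1)) t :=
      h.congr (fun s hs => hPeq (t + 1) hb s hs) (hPeq (t + 1) hb t htIcc)
    rw [hPeq (t + 1) hb t htIcc]
    apply h2.mono_of_mem_nhdsWithin
    rw [mem_nhdsWithin]
    exact ⟨Set.Iio (t + 1), isOpen_Iio, by simp, fun s hs => ⟨hs.2, le_of_lt hs.1⟩⟩
  have hPfacts : ∀ t ∈ Set.Ici t₀, (0 < (P t).1 ∧ (P t).1 ≤ fh t) ∧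
      gh t ≤ (P t).2 * A₃ t ∧ (P t).2 ≤ g t₀ / A₃ t₀ := by
    intro t ht
    have hmem : t ∈ Set.Icc t₀ t := Set.right_mem_Icc.mpr ht
    have := hinv t ht (Psol t) (hPsol0 t ht) (hPsold t ht) t hmem
    rwa [← hPeq t ht t hmem] at this
  have hPbd : ∀ t ∈ Set.Ici t₀, ‖P t‖ ≤ M₀ := by
    intro t ht
    have hmem : t ∈ Set.Icc t₀ t := Set.right_mem_Icc.mpr ht
    have := hbound t ht (Psol t) (hPsol0 t ht) (hPsold t ht) t hmem
    rwa [← hPeq t ht t hmem] at this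
  -- matching the given solution on [t₀, T)
  have hmatch : ∀ t, t₀ ≤ t → (t : EReal) < T → P t = (f t, g t / A₃ t) := by
    intro t ht htT
    have hsub : Set.Icc t₀ t ⊆ {s : ℝ | t₀ ≤ s ∧ (s : EReal) < T} := by
      intro s hs
      exact ⟨hs.1, lt_of_le_of_lt (EReal.coe_le_coe_iff.mpr hs.2) htT⟩
    have hfc : ContinuousOn f (Set.Icc t₀ t) := fun s hs =>
      ((hf s (hsub hs).1 (hsub hs).2).continuousWithinAt).mono hsub
    have hgc : ContinuousOn g (Set.Icc t₀ t) := fun s hs =>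
      ((hg s (hsub hs).1 (hsub hs).2).continuousWithinAt).mono hsub
    have hAc' : ContinuousOn A₃ (Set.Icc t₀ t) := hAcont.mono (hIciIci t)
    have hqc : ContinuousOn (fun s => ((f s, g s / A₃ s) : ℝ × ℝ)) (Set.Icc t₀ t) :=
      hfc.prodMk (hgc.div hAc' (fun s hs => ne_of_gt (hA₃pos s hs.1)))
    have hqd : ∀ s ∈ Set.Ico t₀ t, HasDerivWithinAt (fun s => ((f s, g s / A₃ s) : ℝ × ℝ))
        (v s (f s, g s / A₃ s)) (Set.Ici s) s := by
      intro s hs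
      have hsT : (s : EReal) < T := lt_trans (EReal.coe_lt_coe_iff.mpr hs.2) htT
      have hfd := hf s hs.1 hsT
      have hgd := hg s hs.1 hsT
      have hAd : HasDerivWithinAt A₃ (A₃' s) {r : ℝ | t₀ ≤ r ∧ (r : EReal) < T} s :=
        (hA₃deriv s hs.1).mono (fun r hr => hr.1)
      have hAne : A₃ s ≠ 0 := ne_of_gt (hA₃pos s hs.1)
      have hq2 := hgd.div hAd hAne
      have hpair := hfd.prodMk hq2
      have hveq : v s ((f s, g s / A₃ s) : ℝ × ℝ) =
          ((-(α s) * f s - f s * g s : ℝ),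
           (((A₃' s / A₃ s * g s - f s ^ 2) * A₃ s - g s * A₃' s) / A₃ s ^ 2 : ℝ)) := by
        rw [hvdef]
        simp only [max_eq_left hs.1]
        refine Prod.ext ?_ ?_
        · show -(α s) * f s - A₃ s * f s * (g s / A₃ s) = -(α s) * f s - f s * g s
          field_simp
        · show -(f s) ^ 2 / A₃ s
            = ((A₃' s / A₃ s * g s - f s ^ 2) * A₃ s - g s * A₃' s) / A₃ s ^ 2
          field_simp
          ring
      rw [hveq]
      apply hpair.mono_of_mem_nhdsWithin
      rw [mem_nhdsWithin]
      refine ⟨Set.Iio t, isOpen_Iio, hs.2, ?_⟩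
      intro r hr
      exact ⟨le_trans hs.1 hr.2, lt_trans (EReal.coe_lt_coe_iff.mpr hr.1) htT⟩
    obtain ⟨Rq, hRq⟩ := isCompact_Icc.exists_bound_of_continuousOn hqc
    set R := max M₀ Rq with hRdef
    have hR0 : 0 ≤ R := le_trans hM₀0 (le_max_left _ _)
    have := huniq t R hR0 P (fun s => ((f s, g s / A₃ s) : ℝ × ℝ))
      (fun s hs => ((hPd s hs.1).continuousWithinAt).mono (hIciIci t))
      hqc
      (fun s hs => (hPd s hs.1).mono (Set.Ici_subset_Ici.mpr hs.1))
      hqd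
      (fun s hs => le_trans (hPbd s hs.1) (le_max_left _ _))
      (fun s hs => le_trans (hRq s (Set.Ico_subset_Icc_self hs)) (le_max_right _ _))
      (by rw [hP0])
    exact this t (Set.right_mem_Icc.mpr ht)
  -- assemble the answer
  refine ⟨fun t => (P t).1, fun t => (P t).2 * A₃ t, ?_, ?_, ?_, ?_⟩
  · intro t ht htT
    have h := hmatch t ht htT
    constructor
    · show (P t).1 = f t
      rw [h]
    · show (P t).2 * A₃ t = g t
      rw [h]
      exact div_mul_cancel₀ _ (ne_of_gt (hA₃pos t ht))
  · intro t ht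
    have hPd' := hPd t ht
    have hmax : max t t₀ = t := max_eq_left ht
    constructor
    · have h1 : HasDerivWithinAt (fun s => (P s).1) ((v t (P t)).1) (Set.Ici t₀) t := by
        have h := ((ContinuousLinearMap.fst ℝ ℝ ℝ).hasFDerivAt).comp_hasDerivWithinAt t hPd'
        simp at h; exact h
      have hval : (v t (P t)).1 = -(α t) * (P t).1 - (P t).1 * ((P t).2 * A₃ t) := by
        simp only [hvdef, hmax]
        ring
      rwa [hval] at h1
    · have h2 : HasDerivWithinAt (fun s => (P s).2) ((v t (P t)).2) (Set.Ici t₀) t := by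
        have h := ((ContinuousLinearMap.snd ℝ ℝ ℝ).hasFDerivAt).comp_hasDerivWithinAt t hPd'
        simp at h; exact h
      have h3 := h2.mul (hA₃deriv t ht)
      have hval : (v t (P t)).2 * A₃ t + (P t).2 * A₃' t
          = A₃' t / A₃ t * ((P t).2 * A₃ t) - ((P t).1) ^ 2 := by
        simp only [hvdef, hmax]
        have hAne : A₃ t ≠ 0 := ne_of_gt (hA₃pos t ht)
        field_simp
        ring
      rwa [hval] at h3
  · refine ⟨max M₀ (M₀ * ℓ), ?_⟩
    intro t ht
    constructor
    · have h := (norm_fst_le (P t)).trans (hPbd t ht)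
      rw [Real.norm_eq_abs] at h
      exact le_trans h (le_max_left _ _)
    · have h1 : |(P t).2| ≤ M₀ := by
        have h := (norm_snd_le (P t)).trans (hPbd t ht)
        rwa [Real.norm_eq_abs] at h
      have h2 : |A₃ t| = A₃ t := abs_of_pos (hA₃pos t ht)
      rw [abs_mul, h2]
      calc |(P t).2| * A₃ t ≤ M₀ * ℓ :=
            mul_le_mul h1 (hAle t ht) (hA₃pos t ht).le hM₀0
        _ ≤ max M₀ (M₀ * ℓ) := le_max_right _ _
  · -- convergence and strict separation
    set ψ : ℝ → ℝ := fun t => (P t).2 * A₃ t - gh t with hψdef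
    have hψnn : ∀ t ∈ Set.Ici t₀, 0 ≤ ψ t := by
      intro t ht
      have := (hPfacts t ht).2.1
      simp only [hψdef]
      linarith
    have hA'nn : ∀ t ∈ Set.Ici t₀, 0 ≤ A₃' t := fun t ht =>
      derivIci_nonneg_of_mono ht (hA₃deriv t ht) hA₃mono
    have hψbd : ∀ t ∈ Set.Ici t₀, ψ t ≤ M₀ * ℓ + Mh := by
      intro t ht
      have h1 : |(P t).2| ≤ M₀ := by
        have h := (norm_snd_le (P t)).trans (hPbd t ht)
        rwa [Real.norm_eq_abs] at h
      have h2 : (P t).2 * A₃ t ≤ M₀ * ℓ := by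
        calc (P t).2 * A₃ t ≤ |(P t).2| * A₃ t :=
              mul_le_mul_of_nonneg_right (le_abs_self _) (hA₃pos t ht).le
          _ ≤ M₀ * ℓ := mul_le_mul h1 (hAle t ht) (hA₃pos t ht).le hM₀0
      have h3 : -Mh ≤ gh t := by linarith [neg_abs_le (gh t), (hMh t ht).2]
      simp only [hψdef]
      linarith
    have hψc : ContinuousOn ψ (Set.Ici t₀) :=
      ((continuous_snd.comp_continuousOn
        (fun t ht => (hPd t ht).continuousWithinAt)).mul hAcont).sub
        (fun t ht => (hgh t ht).continuousWithinAt)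
    have hder : ∀ s ∈ Set.Ioi t₀, HasDerivAt ψ
        ((v s (P s)).2 * A₃ s + (P s).2 * A₃' s - (A₃' s / A₃ s * gh s - fh s ^ 2)) s := by
      intro s hs
      have h1 : HasDerivAt P (v s (P s)) s :=
        (hPd s (Set.mem_Ici.mpr (le_of_lt hs))).hasDerivAt (Ici_mem_nhds hs)
      have h2 : HasDerivAt (fun r => (P r).2) ((v s (P s)).2) s := by
        have h := ((ContinuousLinearMap.snd ℝ ℝ ℝ).hasFDerivAt).comp_hasDerivAt s h1
        simp at h; exact h
      have h3 : HasDerivAt A₃ (A₃' s) s :=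
        (hA₃deriv s (Set.mem_Ici.mpr (le_of_lt hs))).hasDerivAt (Ici_mem_nhds hs)
      have h4 : HasDerivAt gh (A₃' s / A₃ s * gh s - fh s ^ 2) s :=
        (hgh s (Set.mem_Ici.mpr (le_of_lt hs))).hasDerivAt (Ici_mem_nhds hs)
      exact (h2.mul h3).sub h4
    have hψmono : MonotoneOn ψ (Set.Ici t₀) := by
      apply monotoneOn_of_deriv_nonneg (convex_Ici t₀) hψc
      · rw [interior_Ici]
        exact fun s hs => (hder s hs).differentiableAt.differentiableWithinAt
      · rw [interior_Ici]
        intro s hs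
        rw [(hder s hs).deriv]
        have hsI : s ∈ Set.Ici t₀ := Set.mem_Ici.mpr (le_of_lt hs)
        have hAne : A₃ s ≠ 0 := ne_of_gt (hA₃pos s hsI)
        have heq : (v s (P s)).2 * A₃ s + (P s).2 * A₃' s
            - (A₃' s / A₃ s * gh s - fh s ^ 2)
            = A₃' s / A₃ s * ψ s + (fh s ^ 2 - (P s).1 ^ 2) := by
          simp only [hvdef, max_eq_left (Set.mem_Ici.mp hsI), hψdef]
          field_simp
          ring
        rw [heq]
        have hP := hPfacts s hsI
        have t1 : 0 ≤ A₃' s / A₃ s * ψ s :=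
          mul_nonneg (div_nonneg (hA'nn s hsI) (hA₃pos s hsI).le) (hψnn s hsI)
        have t2 : 0 ≤ fh s ^ 2 - (P s).1 ^ 2 := by nlinarith [hP.1.1, hP.1.2]
        linarith
    set L : ℝ := ⨆ t : ℝ, ψ (max t t₀) with hLdef
    have hmono2 : Monotone (fun t => ψ (max t t₀)) := by
      intro s t hst
      exact hψmono (Set.mem_Ici.mpr (le_max_right _ _))
        (Set.mem_Ici.mpr (le_max_right _ _)) (max_le_max hst le_rfl)
    have hbdd2 : BddAbove (Set.range (fun t => ψ (max t t₀))) := by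
      refine ⟨M₀ * ℓ + Mh, ?_⟩
      rintro r ⟨t, rfl⟩
      exact hψbd _ (Set.mem_Ici.mpr (le_max_right _ _))
    have hlim2 : Tendsto (fun t => ψ (max t t₀)) atTop (nhds L) :=
      tendsto_atTop_ciSup hmono2 hbdd2
    have hψlim : Tendsto ψ atTop (nhds L) := by
      apply hlim2.congr'
      filter_upwards [eventually_ge_atTop t₀] with t ht
      rw [max_eq_left ht]
    have hGlim : Tendsto (fun t => (P t).2 * A₃ t) atTop (nhds (L + Ghinf)) := by
      have h := hψlim.add hghlim
      apply h.congr
      intro t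
      simp only [hψdef]
      ring
    refine ⟨L + Ghinf, hGlim, ?_⟩
    have hLge : ∀ t, t₀ ≤ t → ψ t ≤ L := by
      intro t ht
      have := le_ciSup hbdd2 t
      rwa [max_eq_left ht] at this
    have hstrict : ∃ t₂, t₀ ≤ t₂ ∧ 0 < ψ t₂ := by
      rcases lt_or_eq_of_le (hψnn t₀ ht₀Ici) with h | h
      · exact ⟨t₀, le_rfl, h⟩
      · -- ψ t₀ = 0 : use the strict inequality on f
        have hψ0 : ψ t₀ = 0 := h.symm
        have hP2 : (P t₀).2 = g t₀ / A₃ t₀ := by rw [hP0]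
        have hP1 : (P t₀).1 = f t₀ := by rw [hP0]
        have hgeq : g t₀ = gh t₀ := by
          have hcan : (g t₀ / A₃ t₀) * A₃ t₀ = g t₀ := div_mul_cancel₀ _ (ne_of_gt ha₀)
          simp only [hψdef, hP2] at hψ0
          linarith
        have hflt : f t₀ < fh t₀ := by
          rcases lt_or_eq_of_le hf0 with h' | h'
          · exact h'
          · exfalso
            apply hne
            rw [h', hgeq]
        have hu2 : HasDerivWithinAt (fun r => (P r).2) ((v t₀ (P t₀)).2) (Set.Ici t₀) t₀ := by
          have h := ((ContinuousLinearMap.snd ℝ ℝ ℝ).hasFDerivAt).comp_hasDerivWithinAt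
            t₀ (hPd t₀ ht₀Ici)
          simp at h; exact h
        have hψd0 : HasDerivWithinAt ψ
            ((v t₀ (P t₀)).2 * A₃ t₀ + (P t₀).2 * A₃' t₀
              - (A₃' t₀ / A₃ t₀ * gh t₀ - fh t₀ ^ 2)) (Set.Ici t₀) t₀ :=
          (hu2.mul (hA₃deriv t₀ ht₀Ici)).sub (hgh t₀ ht₀Ici)
        have hwd := hψd0.div (hA₃deriv t₀ ht₀Ici) (ne_of_gt ha₀)
        have hdw : (((v t₀ (P t₀)).2 * A₃ t₀ + (P t₀).2 * A₃' t₀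
              - (A₃' t₀ / A₃ t₀ * gh t₀ - fh t₀ ^ 2)) * A₃ t₀ - ψ t₀ * A₃' t₀) / A₃ t₀ ^ 2
            = (fh t₀ ^ 2 - f t₀ ^ 2) / A₃ t₀ := by
          rw [hψ0, ← hgeq]
          simp only [hvdef, max_self, hP1, hP2]
          have hAne : A₃ t₀ ≠ 0 := ne_of_gt ha₀
          field_simp
          ring
        rw [hdw] at hwd
        have hdwpos : 0 < (fh t₀ ^ 2 - f t₀ ^ 2) / A₃ t₀ :=
          div_pos (by nlinarith) ha₀
        rw [hasDerivWithinAt_iff_tendsto_slope] at hwd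
        haveI : (𝓝[Set.Ici t₀ \ {t₀}] t₀).NeBot := by
          apply Filter.neBot_of_le (f := 𝓝[Set.Ioi t₀] t₀)
          apply nhdsWithin_mono
          intro r hr
          exact ⟨Set.mem_Ici.mpr (le_of_lt hr), ne_of_gt (Set.mem_Ioi.mp hr)⟩
        have hev := hwd.eventually (eventually_gt_nhds hdwpos)
        obtain ⟨s, hslope, hsmem⟩ := (hev.and eventually_mem_nhdsWithin).exists
        have hsne : s ≠ t₀ := hsmem.2
        have hs0 : t₀ < s := lt_of_le_of_ne hsmem.1 (Ne.symm hsne)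
        rw [slope_def_field] at hslope
        have hψA0 : (ψ / A₃) t₀ = 0 := by rw [Pi.div_apply, hψ0]; simp
        rw [hψA0, sub_zero, Pi.div_apply] at hslope
        have hwpos : 0 < ψ s / A₃ s := by
          have hd : (0:ℝ) < s - t₀ := sub_pos.mpr hs0
          have h := mul_pos hslope hd
          rwa [div_mul_cancel₀ _ (ne_of_gt hd)] at h
        have hψpos : 0 < ψ s := by
          have h := mul_pos hwpos (hA₃pos s (le_of_lt hs0))
          rwa [div_mul_cancel₀ _ (ne_of_gt (hA₃pos s (le_of_lt hs0)))] at h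
        exact ⟨s, le_of_lt hs0, hψpos⟩
    obtain ⟨t₂, ht₂, hψt₂⟩ := hstrict
    have := hLge t₂ ht₂
    linarith
end

section
/- Let T₁ > 0 and let P, Q, S, A : (0, T₁] → ℝ be continuous with 2/3 < P(t) < 1, 0 < Q(t) < 1, Q nonincreasing, S(t) > 0 and A(t) > 0 for all t. Let Γ > 0 satisfy Γ² < (2/3)·Q(T₁). Suppose (F, G) solves F'(t) = (F(t)/A(t))·(P(t) − G(t)), G'(t) = S(t)·(Q(t) G(t) − F(t)²) on (0, t₁] for some t₁ ∈ (0, T₁], with 0 ≤ F(t₁) < Γ and 0 < G(t₁) < 2/3. Then 0 ≤ F(t) < Γ and 0 < G(t) < 2/3 for all t ∈ (0, t₁]. -/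
open Set Filter Topology

/-- Forward zero-propagation for a linear ODE `f' = c f`. -/
lemma ode_zero_right {c f : ℝ → ℝ} {a b : ℝ}
    (hfc : ContinuousOn f (Set.Icc a b)) (hcc : ContinuousOn c (Set.Icc a b))
    (hf' : ∀ t ∈ Set.Ico a b, HasDerivWithinAt f (c t * f t) (Set.Ici t) t)
    (ha : f a = 0) : ∀ t ∈ Set.Icc a b, f t = 0 := by
  obtain ⟨C, hC⟩ := isCompact_Icc.exists_bound_of_continuousOn hcc
  have key := norm_le_gronwallBound_of_norm_deriv_right_le (f' := fun t => c t * f t)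
    (δ := 0) (K := max C 0) (ε := 0) hfc hf' (by simp [ha]) ?_
  · intro t ht
    have h := key t ht
    rw [gronwallBound_ε0_δ0] at h
    exact norm_le_zero_iff.mp h
  · intro t ht
    have h1 : ‖c t‖ ≤ max C 0 := le_trans (hC t (Set.Ico_subset_Icc_self ht)) (le_max_left _ _)
    calc ‖c t * f t‖ = ‖c t‖ * ‖f t‖ := norm_mul _ _
      _ ≤ max C 0 * ‖f t‖ := by
          exact mul_le_mul_of_nonneg_right h1 (norm_nonneg _)
      _ = max C 0 * ‖f t‖ + 0 := by ring

/-- Backward zero-propagation for a linear ODE `f' = c f`. -/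
lemma ode_zero_left {c f : ℝ → ℝ} {a b : ℝ}
    (hfc : ContinuousOn f (Set.Icc a b)) (hcc : ContinuousOn c (Set.Icc a b))
    (hf' : ∀ t ∈ Set.Ioc a b, HasDerivWithinAt f (c t * f t) (Set.Iic t) t)
    (hb : f b = 0) : ∀ t ∈ Set.Icc a b, f t = 0 := by
  have hmt1 : Set.MapsTo Neg.neg (Set.Icc (-b) (-a)) (Set.Icc a b) :=
    fun _ ht ↦ ⟨le_neg.mp ht.2, neg_le.mp ht.1⟩
  have hmt2 : Set.MapsTo Neg.neg (Set.Ico (-b) (-a)) (Set.Ioc a b) :=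
    fun _ ht ↦ ⟨lt_neg.mp ht.2, neg_le.mp ht.1⟩
  have hmt3 (t : ℝ) : Set.MapsTo Neg.neg (Set.Ici t) (Set.Iic (-t)) :=
    fun _ ht' ↦ Set.mem_Iic.mpr <| neg_le_neg ht'
  have key : ∀ s ∈ Set.Icc (-b) (-a), (f ∘ Neg.neg) s = 0 := by
    apply ode_zero_right (c := fun s => -(c (-s)))
    · exact hfc.comp continuousOn_neg hmt1
    · exact ((hcc.comp continuousOn_neg hmt1)).neg
    · intro t ht
      refine (HasFDerivWithinAt.comp_hasDerivWithinAt t (hf' (-t) (hmt2 ht))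
        (hasDerivAt_neg t).hasDerivWithinAt (hmt3 t)).congr_deriv ?_
      simp [Function.comp]
    · simp [hb]
  intro t ht
  have := key (-t) ⟨neg_le_neg ht.2, neg_le_neg ht.1⟩
  simpa using this

/-- If `f` has right-derivative `d` at the left endpoint `a` of `[a,b]` and `f u ≥ f a`
on `(a,b]`, then `d ≥ 0`. -/
lemma deriv_nonneg_of_right_min {f : ℝ → ℝ} {a b d : ℝ} (hab : a < b)
    (hd : HasDerivWithinAt f d (Set.Icc a b) a)
    (h : ∀ u ∈ Set.Ioc a b, f a ≤ f u) : 0 ≤ d := by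
  rw [hasDerivWithinAt_iff_tendsto_slope] at hd
  rw [Set.Icc_diff_left, nhdsWithin_Ioc_eq_nhdsGT hab] at hd
  haveI : (𝓝[>] a).NeBot := nhdsGT_neBot_of_exists_gt ⟨b, hab⟩
  refine ge_of_tendsto hd ?_
  filter_upwards [Ioc_mem_nhdsGT_of_mem (Set.mem_Ico.mpr ⟨le_refl a, hab⟩)] with u hu
  rw [slope_def_field]
  exact div_nonneg (sub_nonneg.mpr (h u hu)) (sub_nonneg.mpr hu.1.le)


/-- Backward-invariance lemma. Let `T₁ > 0`, `P, Q, S, A : (0, T₁] → ℝ`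
continuous with `2/3 < P < 1`, `0 < Q < 1`, `Q` nonincreasing, `S, A > 0`, and let
`Γ > 0` satisfy `Γ² < (2/3)·Q(T₁)`. If `(F, G)` solves
`F' = (F/A)(P − G)`, `G' = S(Q G − F²)` on `(0, t₁]` with `0 ≤ F(t₁) < Γ` and
`0 < G(t₁) < 2/3`, then `0 ≤ F < Γ` and `0 < G < 2/3` on all of `(0, t₁]`. -/
theorem backward_invariance (T₁ : ℝ) (hT₁ : 0 < T₁)
    (P Q S A F G : ℝ → ℝ)
    (hPcont : ContinuousOn P (Set.Ioc 0 T₁)) (hQcont : ContinuousOn Q (Set.Ioc 0 T₁))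
    (hScont : ContinuousOn S (Set.Ioc 0 T₁)) (hAcont : ContinuousOn A (Set.Ioc 0 T₁))
    (hP : ∀ t ∈ Set.Ioc 0 T₁, 2 / 3 < P t ∧ P t < 1)
    (hQ : ∀ t ∈ Set.Ioc 0 T₁, 0 < Q t ∧ Q t < 1)
    (hQmono : AntitoneOn Q (Set.Ioc 0 T₁))
    (hS : ∀ t ∈ Set.Ioc 0 T₁, 0 < S t)
    (hA : ∀ t ∈ Set.Ioc 0 T₁, 0 < A t)
    (Γ : ℝ) (hΓ : 0 < Γ) (hΓ2 : Γ ^ 2 < (2 / 3) * Q T₁)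
    (t₁ : ℝ) (ht₁ : t₁ ∈ Set.Ioc 0 T₁)
    (hF : ∀ t ∈ Set.Ioc 0 t₁,
      HasDerivWithinAt F (F t / A t * (P t - G t)) (Set.Ioc 0 t₁) t)
    (hG : ∀ t ∈ Set.Ioc 0 t₁,
      HasDerivWithinAt G (S t * (Q t * G t - (F t) ^ 2)) (Set.Ioc 0 t₁) t)
    (hF1 : 0 ≤ F t₁ ∧ F t₁ < Γ) (hG1 : 0 < G t₁ ∧ G t₁ < 2 / 3) :
    ∀ t ∈ Set.Ioc 0 t₁, (0 ≤ F t ∧ F t < Γ) ∧ (0 < G t ∧ G t < 2 / 3) := by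
  obtain ⟨ht₁0, ht₁T⟩ := ht₁
  have hsub : Set.Ioc 0 t₁ ⊆ Set.Ioc 0 T₁ := Set.Ioc_subset_Ioc_right ht₁T
  have hIcc : ∀ s : ℝ, 0 < s → Set.Icc s t₁ ⊆ Set.Ioc 0 t₁ :=
    fun s hs x hx => ⟨lt_of_lt_of_le hs hx.1, hx.2⟩
  -- continuity of F and G
  have hFc : ContinuousOn F (Set.Ioc 0 t₁) := fun t ht => (hF t ht).continuousWithinAt
  have hGc : ContinuousOn G (Set.Ioc 0 t₁) := fun t ht => (hG t ht).continuousWithinAt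
  -- derivative conversions
  have hmemIci : ∀ t : ℝ, 0 < t → t < t₁ → Set.Ioc 0 t₁ ∈ 𝓝[Set.Ici t] t := by
    intro t h0 h1
    exact mem_nhdsWithin.2 ⟨Set.Ioo 0 t₁, isOpen_Ioo, ⟨h0, h1⟩,
      fun x hx => ⟨hx.1.1, hx.1.2.le⟩⟩
  have hmemIic : ∀ t : ℝ, 0 < t → t ≤ t₁ → Set.Ioc 0 t₁ ∈ 𝓝[Set.Iic t] t := by
    intro t h0 h1
    exact mem_nhdsWithin.2 ⟨Set.Ioi 0, isOpen_Ioi, h0, fun x hx => ⟨hx.1, le_trans hx.2 h1⟩⟩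
  have hFat : ∀ t ∈ Set.Ioo 0 t₁, HasDerivAt F (F t / A t * (P t - G t)) t := by
    intro t ht
    exact (hF t (Set.Ioo_subset_Ioc_self ht)).hasDerivAt (Ioc_mem_nhds ht.1 ht.2)
  -- the coefficient of the linear ODE for F
  set c : ℝ → ℝ := fun t => (P t - G t) / A t with hc
  have hF' : ∀ t ∈ Set.Ioc 0 t₁, HasDerivWithinAt F (c t * F t) (Set.Ioc 0 t₁) t := by
    intro t ht
    convert hF t ht using 1
    simp only [hc]; ring
  have hccont : ContinuousOn c (Set.Ioc 0 t₁) :=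
    ((hPcont.mono hsub).sub hGc).div (hAcont.mono hsub) (fun t ht => (hA t (hsub ht)).ne')
  -- Step 1 : dichotomy for F
  have hzero : ∀ s ∈ Set.Ioc 0 t₁, F s = 0 → ∀ u ∈ Set.Icc s t₁, F u = 0 := by
    intro s hs hFs
    apply ode_zero_right (c := c) (hFc.mono (hIcc s hs.1)) (hccont.mono (hIcc s hs.1)) ?_ hFs
    intro t ht
    exact (hF' t ⟨lt_of_lt_of_le hs.1 ht.1, ht.2.le⟩).mono_of_mem_nhdsWithin
      (hmemIci t (lt_of_lt_of_le hs.1 ht.1) ht.2)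
  have hFcases : (∀ s ∈ Set.Ioc 0 t₁, F s = 0) ∨ (∀ s ∈ Set.Ioc 0 t₁, 0 < F s) := by
    rcases hF1.1.lt_or_eq with hpos | heq
    · right
      intro s hs
      by_contra hneg
      push_neg at hneg
      rcases hneg.lt_or_eq with hlt | heq0
      · have hIVT := intermediate_value_Icc hs.2 (hFc.mono (hIcc s hs.1))
        have h0mem : (0 : ℝ) ∈ Set.Icc (F s) (F t₁) := ⟨hlt.le, hpos.le⟩
        obtain ⟨u, hu, hu0⟩ := hIVT h0mem
        have := hzero u ⟨lt_of_lt_of_le hs.1 hu.1, hu.2⟩ hu0 t₁ ⟨hu.2, le_refl t₁⟩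
        exact hpos.ne' this
      · have := hzero s hs heq0 t₁ ⟨hs.2, le_refl t₁⟩
        exact hpos.ne' this
    · left
      intro s hs
      have key := ode_zero_left (c := c) (a := s) (b := t₁)
        (hFc.mono (hIcc s hs.1)) (hccont.mono (hIcc s hs.1)) ?_ heq.symm
      · exact key s ⟨le_refl s, hs.2⟩
      · intro t ht
        exact (hF' t ⟨lt_trans hs.1 ht.1, ht.2⟩).mono_of_mem_nhdsWithin
          (hmemIic t (lt_trans hs.1 ht.1) ht.2)
  have hFnn : ∀ s ∈ Set.Ioc 0 t₁, 0 ≤ F s := by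
    rcases hFcases with h | h
    · exact fun s hs => (h s hs).ge
    · exact fun s hs => (h s hs).le
  -- Monotonicity of F on intervals where G < 2/3
  have hFmono : ∀ a' ∈ Set.Ioc 0 t₁, (∀ u, a' < u → u < t₁ → G u < 2 / 3) →
      MonotoneOn F (Set.Icc a' t₁) := by
    intro a' ha' hGlt
    apply monotoneOn_of_hasDerivWithinAt_nonneg (convex_Icc a' t₁)
      (hFc.mono (hIcc a' ha'.1)) (f' := fun x => F x / A x * (P x - G x))
    · intro x hx
      rw [interior_Icc] at hx
      exact (hFat x ⟨lt_trans ha'.1 hx.1, hx.2⟩).hasDerivWithinAt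
    · intro x hx
      rw [interior_Icc] at hx
      have hxI : x ∈ Set.Ioc 0 t₁ := ⟨lt_trans ha'.1 hx.1, hx.2.le⟩
      have hPx := (hP x (hsub hxI)).1
      have hGx := hGlt x hx.1 hx.2
      have : (0:ℝ) ≤ P x - G x := by linarith
      exact mul_nonneg (div_nonneg (hFnn x hxI) (hA x (hsub hxI)).le) this
  -- The invariant set for G
  set B : Set ℝ := {t | t ∈ Set.Ioc 0 t₁ ∧ ∀ u ∈ Set.Icc t t₁, 0 < G u ∧ G u < 2 / 3} with hB
  have ht₁B : t₁ ∈ B := by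
    refine ⟨⟨ht₁0, le_refl t₁⟩, fun u hu => ?_⟩
    have : u = t₁ := le_antisymm hu.2 hu.1
    rw [this]; exact hG1
  have hBne : B.Nonempty := ⟨t₁, ht₁B⟩
  have hBbdd : BddBelow B := ⟨0, fun x hx => hx.1.1.le⟩
  set a := sInf B with haDef
  have haub : a ≤ t₁ := csInf_le hBbdd ht₁B
  have hmid : ∀ u, a < u → u ≤ t₁ → 0 < G u ∧ G u < 2 / 3 := by
    intro u hau hu
    obtain ⟨b, hbB, hbu⟩ := exists_lt_of_csInf_lt hBne hau
    exact hbB.2 u ⟨hbu.le, hu⟩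
  have hale : a ≤ 0 := by
    by_contra hapos
    push_neg at hapos
    have haI : a ∈ Set.Ioc 0 t₁ := ⟨hapos, haub⟩
    have haT : a ∈ Set.Ioc 0 T₁ := hsub haI
    -- closed bounds at a
    have hGa : 0 ≤ G a ∧ G a ≤ 2 / 3 := by
      rcases haub.lt_or_eq with halt | heq
      · have hcw : ContinuousWithinAt G (Set.Ioc a t₁) a :=
          (hGc a haI).mono (fun x hx => ⟨lt_trans hapos hx.1, hx.2⟩)
        rw [ContinuousWithinAt, nhdsWithin_Ioc_eq_nhdsGT halt] at hcw
        haveI : (𝓝[>] a).NeBot := nhdsGT_neBot_of_exists_gt ⟨t₁, halt⟩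
        have hev : ∀ᶠ u in 𝓝[>] a, 0 ≤ G u ∧ G u ≤ 2 / 3 := by
          filter_upwards [Ioc_mem_nhdsGT_of_mem (Set.mem_Ico.mpr ⟨le_refl a, halt⟩)] with u hu
          exact ⟨(hmid u hu.1 hu.2).1.le, (hmid u hu.1 hu.2).2.le⟩
        constructor
        · exact ge_of_tendsto hcw (hev.mono fun u hu => hu.1)
        · exact le_of_tendsto hcw (hev.mono fun u hu => hu.2)
      · rw [heq]; exact ⟨hG1.1.le, hG1.2.le⟩
    -- strict lower bound at a
    have hGa1 : 0 < G a := by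
      rcases hGa.1.lt_or_eq with h | h
      · exact h
      exfalso
      have halt : a < t₁ := by
        rcases haub.lt_or_eq with h' | h'
        · exact h'
        · exfalso; rw [h'] at h; exact hG1.1.ne h
      rcases hFcases with hF0 | hFpos
      · -- F ≡ 0, so G solves a linear ODE with G a = 0
        have hall : ∀ u ∈ Set.Icc a t₁, G u = 0 := by
          apply ode_zero_right (c := fun t => S t * Q t)
            (hGc.mono (hIcc a hapos))
            (((hScont.mul hQcont).mono hsub).mono (hIcc a hapos)) ?_ h.symm
          intro t ht
          have htI : t ∈ Set.Ioc 0 t₁ := ⟨lt_of_lt_of_le hapos ht.1, ht.2.le⟩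
          have hd := (hG t htI).mono_of_mem_nhdsWithin
            (hmemIci t (lt_of_lt_of_le hapos ht.1) ht.2)
          refine hd.congr_deriv ?_
          rw [hF0 t htI]; ring
        exact hG1.1.ne' (hall t₁ ⟨halt.le, le_refl t₁⟩)
      · -- F a > 0 forces negative derivative at a left-minimum of G
        have hd := (hG a haI).mono (hIcc a hapos)
        have hd0 : 0 ≤ S a * (Q a * G a - F a ^ 2) :=
          deriv_nonneg_of_right_min halt hd
            (fun u hu => by rw [← h]; exact (hmid u hu.1 hu.2).1.le)
        have hFa := hFpos a haI
        have : S a * (Q a * G a - F a ^ 2) < 0 := by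
          apply mul_neg_of_pos_of_neg (hS a haT)
          rw [← h]
          nlinarith
        linarith
    -- strict upper bound at a
    have hGa2 : G a < 2 / 3 := by
      rcases hGa.2.lt_or_eq with h | h
      · exact h
      exfalso
      have halt : a < t₁ := by
        rcases haub.lt_or_eq with h' | h'
        · exact h'
        · exfalso; rw [h'] at h; exact hG1.2.ne h
      have hmono := hFmono a haI (fun u hu1 hu2 => (hmid u hu1 hu2.le).2)
      have hFa : F a ≤ F t₁ :=
        hmono ⟨le_refl a, haub⟩ ⟨haub, le_refl t₁⟩ haub
      have hFaΓ : F a < Γ := lt_of_le_of_lt hFa hF1.2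
      have hQa : Q T₁ ≤ Q a := hQmono haT ⟨hT₁, le_refl T₁⟩ (haub.trans ht₁T)
      have hd := (hG a haI).mono (hIcc a hapos)
      have hd0 : S a * (Q a * G a - F a ^ 2) ≤ 0 := by
        have := deriv_nonneg_of_right_min halt hd.neg
          (fun u hu => by
            simp only [Pi.neg_apply, neg_le_neg_iff]
            rw [h]; exact (hmid u hu.1 hu.2).2.le)
        linarith
      have hFsq : F a ^ 2 < Γ ^ 2 :=
        pow_lt_pow_left₀ hFaΓ (hFnn a haI) (by norm_num)
      have : 0 < S a * (Q a * G a - F a ^ 2) := by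
        apply mul_pos (hS a haT)
        rw [h]
        nlinarith
      linarith
    -- extend below a, contradicting the infimum
    have hcwa : Filter.Tendsto G (𝓝[Set.Ioc 0 t₁] a) (𝓝 (G a)) := hGc a haI
    have hev := hcwa (Ioo_mem_nhds hGa1 hGa2)
    rw [Filter.mem_map, mem_nhdsWithin] at hev
    obtain ⟨U, hUopen, haU, hUsub⟩ := hev
    obtain ⟨ε, hε, hball⟩ := Metric.isOpen_iff.mp hUopen a haU
    set b := max (a / 2) (a - ε / 2) with hbDef
    have hb0 : 0 < b := lt_max_of_lt_left (half_pos hapos)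
    have hba : b < a := max_lt (half_lt_self hapos) (by linarith)
    have hbB : b ∈ B := by
      refine ⟨⟨hb0, hba.le.trans haub⟩, fun u hu => ?_⟩
      rcases lt_or_ge u a with hua | hau
      · have huI : u ∈ Set.Ioc 0 t₁ := ⟨lt_of_lt_of_le hb0 hu.1, hu.2⟩
        have hdist : dist u a < ε := by
          rw [Real.dist_eq, abs_lt]
          constructor
          · have : a - ε / 2 ≤ b := le_max_right _ _
            have := le_trans this hu.1
            linarith
          · linarith
        have := hUsub ⟨hball hdist, huI⟩
        exact ⟨this.1, this.2⟩
      · rcases hau.lt_or_eq with h' | h'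
        · exact hmid u h' hu.2
        · rw [← h']; exact ⟨hGa1, hGa2⟩
    have : a ≤ b := csInf_le hBbdd hbB
    linarith
  -- conclude
  have hGall : ∀ t ∈ Set.Ioc 0 t₁, 0 < G t ∧ G t < 2 / 3 :=
    fun t ht => hmid t (lt_of_le_of_lt hale ht.1) ht.2
  intro t ht
  refine ⟨⟨hFnn t ht, ?_⟩, hGall t ht⟩
  have hmono := hFmono t ht (fun u hu1 hu2 => (hGall u ⟨lt_trans ht.1 hu1, hu2.le⟩).2)
  have : F t ≤ F t₁ := hmono ⟨le_refl t, ht.2⟩ ⟨ht.2, le_refl t₁⟩ ht.2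
  exact lt_of_le_of_lt this hF1.2
end

section
/- Let c > 0 and let a₁, a₃ : J → ℝ be differentiable on an interval J ⊆ (c, ∞), satisfying (η − c)² a₁'(η) = η a₁(η) (a₃(η) − 1) and η a₃'(η) = a₁(η)² − a₃(η) for all η ∈ J. Then the function η ↦ (η − c)² a₁(η)² − (η a₃(η) − c)² is constant on J. -/
/-- Let `c > 0` and `a₁, a₃` differentiable on an interval `J ⊆ (c, ∞)`
satisfying `(η − c)² a₁' = η a₁ (a₃ − 1)` and `η a₃' = a₁² − a₃`. Then
`η ↦ (η − c)² a₁(η)² − (η a₃(η) − c)²` is constant on `J`. -/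
theorem conserved_quantity (c : ℝ) (hc : 0 < c)
    (J : Set ℝ) (hJconn : J.OrdConnected) (hJ : J ⊆ Set.Ioi c)
    (a₁ a₃ a₁' a₃' : ℝ → ℝ)
    (ha₁ : ∀ η ∈ J, HasDerivWithinAt a₁ (a₁' η) J η)
    (ha₃ : ∀ η ∈ J, HasDerivWithinAt a₃ (a₃' η) J η)
    (heq₁ : ∀ η ∈ J, (η - c) ^ 2 * a₁' η = η * a₁ η * (a₃ η - 1))
    (heq₃ : ∀ η ∈ J, η * a₃' η = (a₁ η) ^ 2 - a₃ η) :
    ∀ η₁ ∈ J, ∀ η₂ ∈ J,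
      (η₁ - c) ^ 2 * (a₁ η₁) ^ 2 - (η₁ * a₃ η₁ - c) ^ 2 =
      (η₂ - c) ^ 2 * (a₁ η₂) ^ 2 - (η₂ * a₃ η₂ - c) ^ 2 := by
  set F : ℝ → ℝ := fun η => (η - c) ^ 2 * (a₁ η) ^ 2 - (η * a₃ η - c) ^ 2 with hF
  have key : ∀ η ∈ J, HasDerivWithinAt F 0 J η := by
    intro η hη
    have h1 := ha₁ η hη
    have h3 := ha₃ η hη
    have hid : HasDerivWithinAt (fun x : ℝ => x) 1 J η := hasDerivWithinAt_id η J
    have d1 : HasDerivWithinAt (fun x => (x - c) ^ 2 * (a₁ x) ^ 2)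
        ((2 * (η - c) ^ 1 * 1) * (a₁ η) ^ 2 + (η - c) ^ 2 * (2 * (a₁ η) ^ 1 * a₁' η)) J η :=
      ((hid.sub_const c).pow 2).mul (h1.pow 2)
    have d2 : HasDerivWithinAt (fun x => (x * a₃ x - c) ^ 2)
        (2 * (η * a₃ η - c) ^ 1 * (1 * a₃ η + η * a₃' η)) J η :=
      ((hid.mul h3).sub_const c).pow 2
    have := d1.sub d2
    refine this.congr_deriv (Eq.symm ?_)
    have e1 := heq₁ η hη
    have e3 := heq₃ η hη
    linear_combination (-2 * a₁ η) * e1 + (2 * (η * a₃ η - c)) * e3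
  have hconv : Convex ℝ J := hJconn.convex
  intro η₁ h₁ η₂ h₂
  have := hconv.norm_image_sub_le_of_norm_hasDerivWithin_le (C := 0) key
    (fun x _ => by simp) h₂ h₁
  simp only [zero_mul, norm_le_zero_iff, sub_eq_zero] at this
  simpa [hF] using this
end

section
/- Let c > 0, C > 0, D > 0. Define on (c, ∞) the functions a₁(η) = (C/(η − c)) · csch(C/(η − c) + D) and a₃(η) = (1/η) · ( c + C·coth(C/(η − c) + D) ). Then (a₁, a₃) satisfies (η − c)² a₁'(η) = η a₁(η)(a₃(η) − 1) and η a₃'(η) = a₁(η)² − a₃(η) for all η ∈ (c, ∞). -/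
/-- Let `c > 0`, `C > 0`, `D > 0`, and define on `(c, ∞)` the functions
`a₁(η) = (C/(η − c))·csch(C/(η − c) + D)` and
`a₃(η) = (1/η)·(c + C·coth(C/(η − c) + D))`. Then `(a₁, a₃)` satisfies
`(η − c)² a₁' = η a₁ (a₃ − 1)` and `η a₃' = a₁² − a₃` on `(c, ∞)`. -/
theorem taubnut_asd_general_solution (c C D : ℝ) (hc : 0 < c) (hC : 0 < C) (hD : 0 < D) :
    ∀ η ∈ Set.Ioi c,
      DifferentiableAt ℝ
        (fun η : ℝ => (C / (η - c)) * (Real.sinh (C / (η - c) + D))⁻¹) η ∧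
      DifferentiableAt ℝ
        (fun η : ℝ => (1 / η) * (c + C * (Real.cosh (C / (η - c) + D) /
          Real.sinh (C / (η - c) + D)))) η ∧
      (η - c) ^ 2 *
          deriv (fun η : ℝ => (C / (η - c)) * (Real.sinh (C / (η - c) + D))⁻¹) η =
        η * ((C / (η - c)) * (Real.sinh (C / (η - c) + D))⁻¹) *
          ((1 / η) * (c + C * (Real.cosh (C / (η - c) + D) /
            Real.sinh (C / (η - c) + D))) - 1) ∧
      η * deriv (fun η : ℝ => (1 / η) * (c + C * (Real.cosh (C / (η - c) + D) /
            Real.sinh (C / (η - c) + D)))) η =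
        ((C / (η - c)) * (Real.sinh (C / (η - c) + D))⁻¹) ^ 2 -
          (1 / η) * (c + C * (Real.cosh (C / (η - c) + D) /
            Real.sinh (C / (η - c) + D))) := by
  intro η hη
  have hη' : c < η := hη
  have hs : η - c ≠ 0 := sub_ne_zero.2 (ne_of_gt hη')
  have hηne : η ≠ 0 := ne_of_gt (hc.trans hη')
  have hupos : 0 < C / (η - c) + D := add_pos (div_pos hC (sub_pos.2 hη')) hD
  have hsinh : Real.sinh (C / (η - c) + D) ≠ 0 := ne_of_gt (Real.sinh_pos_iff.2 hupos)
  have hsub : HasDerivAt (fun η : ℝ => η - c) 1 η := (hasDerivAt_id η).sub_const c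
  have hF : HasDerivAt (fun η : ℝ => C / (η - c)) (-C / (η - c) ^ 2) η := by
    have : HasDerivAt (fun η : ℝ => C / (η - c)) ((0 * (η - c) - C * 1) / (η - c) ^ 2) η :=
      (hasDerivAt_const η C).div hsub hs
    convert this using 1; ring
  have hU : HasDerivAt (fun η : ℝ => C / (η - c) + D) (-C / (η - c) ^ 2) η :=
    hF.add_const D
  have hS : HasDerivAt (fun η : ℝ => Real.sinh (C / (η - c) + D))
      (Real.cosh (C / (η - c) + D) * (-C / (η - c) ^ 2)) η :=
    (Real.hasDerivAt_sinh _).comp η hU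
  have hCo : HasDerivAt (fun η : ℝ => Real.cosh (C / (η - c) + D))
      (Real.sinh (C / (η - c) + D) * (-C / (η - c) ^ 2)) η :=
    (Real.hasDerivAt_cosh _).comp η hU
  have hA1 : HasDerivAt (fun η : ℝ => (C / (η - c)) * (Real.sinh (C / (η - c) + D))⁻¹)
      ((-C / (η - c) ^ 2) * (Real.sinh (C / (η - c) + D))⁻¹ +
        (C / (η - c)) * (-(Real.cosh (C / (η - c) + D) * (-C / (η - c) ^ 2)) /
          Real.sinh (C / (η - c) + D) ^ 2)) η :=
    hF.mul (hS.inv hsinh)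
  have hInv : HasDerivAt (fun η : ℝ => 1 / η) (-1 / η ^ 2) η := by
    have : HasDerivAt (fun η : ℝ => η⁻¹) (-1 / η ^ 2) η := ((hasDerivAt_id η).inv hηne)
    simpa [one_div] using this
  have hQ : HasDerivAt (fun η : ℝ => c + C * (Real.cosh (C / (η - c) + D) /
      Real.sinh (C / (η - c) + D)))
      (C * ((Real.sinh (C / (η - c) + D) * (-C / (η - c) ^ 2) * Real.sinh (C / (η - c) + D) -
        Real.cosh (C / (η - c) + D) * (Real.cosh (C / (η - c) + D) * (-C / (η - c) ^ 2))) /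
        Real.sinh (C / (η - c) + D) ^ 2)) η :=
    ((hCo.div hS hsinh).const_mul C).const_add c
  have hA3 : HasDerivAt (fun η : ℝ => (1 / η) * (c + C * (Real.cosh (C / (η - c) + D) /
      Real.sinh (C / (η - c) + D))))
      ((-1 / η ^ 2) * (c + C * (Real.cosh (C / (η - c) + D) / Real.sinh (C / (η - c) + D))) +
        (1 / η) * (C * ((Real.sinh (C / (η - c) + D) * (-C / (η - c) ^ 2) *
          Real.sinh (C / (η - c) + D) -
          Real.cosh (C / (η - c) + D) * (Real.cosh (C / (η - c) + D) * (-C / (η - c) ^ 2))) /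
          Real.sinh (C / (η - c) + D) ^ 2))) η :=
    hInv.mul hQ
  refine ⟨hA1.differentiableAt, hA3.differentiableAt, ?_, ?_⟩
  · rw [hA1.deriv]
    obtain ⟨S, hSd⟩ : ∃ S, Real.sinh (C / (η - c) + D) = S := ⟨_, rfl⟩
    obtain ⟨K, hKd⟩ : ∃ K, Real.cosh (C / (η - c) + D) = K := ⟨_, rfl⟩
    rw [hSd] at hsinh
    rw [hSd, hKd]
    field_simp
    ring
  · rw [hA3.deriv]
    have hid : Real.cosh (C / (η - c) + D) ^ 2 = Real.sinh (C / (η - c) + D) ^ 2 + 1 :=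
      Real.cosh_sq _
    obtain ⟨S, hSd⟩ : ∃ S, Real.sinh (C / (η - c) + D) = S := ⟨_, rfl⟩
    obtain ⟨K, hKd⟩ : ∃ K, Real.cosh (C / (η - c) + D) = K := ⟨_, rfl⟩
    rw [hSd] at hsinh
    rw [hSd, hKd] at hid
    rw [hSd, hKd]
    field_simp
    linear_combination (C ^ 2 * η) * hid
end

section
/- Let c > 0 and B ≥ 0. Define on (c, ∞) the functions a₁(η) = 1/(1 + B(η − c)) and a₃(η) = (1/η) · ( c + (η − c)/(1 + B(η − c)) ). Then (a₁, a₃) satisfies (η − c)² a₁'(η) = η a₁(η)(a₃(η) − 1) and η a₃'(η) = a₁(η)² − a₃(η) for all η ∈ (c, ∞). -/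
/-- Let `c > 0` and `B ≥ 0`, and define on `(c, ∞)` the functions
`a₁(η) = 1/(1 + B(η − c))` and `a₃(η) = (1/η)·(c + (η − c)/(1 + B(η − c)))`. Then
`(a₁, a₃)` satisfies `(η − c)² a₁' = η a₁ (a₃ − 1)` and `η a₃' = a₁² − a₃`
on `(c, ∞)`. -/
theorem etesi_hausel_solution (c B : ℝ) (hc : 0 < c) (hB : 0 ≤ B) :
    ∀ η ∈ Set.Ioi c,
      DifferentiableAt ℝ (fun η : ℝ => (1 + B * (η - c))⁻¹) η ∧
      DifferentiableAt ℝ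
        (fun η : ℝ => (1 / η) * (c + (η - c) / (1 + B * (η - c)))) η ∧
      (η - c) ^ 2 * deriv (fun η : ℝ => (1 + B * (η - c))⁻¹) η =
        η * (1 + B * (η - c))⁻¹ *
          ((1 / η) * (c + (η - c) / (1 + B * (η - c))) - 1) ∧
      η * deriv (fun η : ℝ => (1 / η) * (c + (η - c) / (1 + B * (η - c)))) η =
        ((1 + B * (η - c))⁻¹) ^ 2 -
          (1 / η) * (c + (η - c) / (1 + B * (η - c))) := by
  intro η hη
  have hηc : c < η := hη
  have hη0 : η ≠ 0 := ne_of_gt (lt_trans hc hηc)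
  have hu : (0:ℝ) < 1 + B * (η - c) := by nlinarith
  have hu0 : 1 + B * (η - c) ≠ 0 := ne_of_gt hu
  -- derivative of u = 1 + B*(η - c)
  have hU : HasDerivAt (fun x : ℝ => 1 + B * (x - c)) B η := by
    simpa using (((hasDerivAt_id η).sub_const c).const_mul B).const_add 1
  have h1 : HasDerivAt (fun x : ℝ => (1 + B * (x - c))⁻¹)
      (-B / (1 + B * (η - c)) ^ 2) η := by
    simpa [Pi.inv_def] using hU.inv hu0
  have hnum : HasDerivAt (fun x : ℝ => c + (x - c) / (1 + B * (x - c)))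
      ((1 * (1 + B * (η - c)) - (η - c) * B) / (1 + B * (η - c)) ^ 2) η := by
    exact (((hasDerivAt_id η).sub_const c).div hU hu0).const_add c
  have hinvx : HasDerivAt (fun x : ℝ => 1 / x) (-1 / η ^ 2) η := by
    simpa [Pi.inv_def] using (hasDerivAt_id η).inv hη0
  have h2 : HasDerivAt (fun x : ℝ => (1 / x) * (c + (x - c) / (1 + B * (x - c))))
      (-1 / η ^ 2 * (c + (η - c) / (1 + B * (η - c))) +
        (1 / η) * ((1 * (1 + B * (η - c)) - (η - c) * B) / (1 + B * (η - c)) ^ 2)) η :=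
    hinvx.mul hnum
  refine ⟨h1.differentiableAt, h2.differentiableAt, ?_, ?_⟩
  · rw [h1.deriv]
    have hu0' : 1 + (η - c) * B ≠ 0 := by rwa [mul_comm]
    field_simp
    ring
  · rw [h2.deriv]
    field_simp
    ring
end
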